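/- arXiv:1306.5696 — 4 statements merged into one kernel-verified Lean document; each statement's English description precedes it below -/
import Mathlib

section
/- For the elementary Nielsen automorphism φ of the free group F(A) with basis A = {a, b, c₁, …, c_q}, defined by a ↦ ab, b ↦ b, c_j ↦ c_j, and for any reduced word w ∈ F(A) such that w·a is reduced (no cancellation between w and a), the image of the cylinder C¹_{w·a} under the boundary extension of φ equals the cylinder C¹_{φ(w)·a}. -/
open FreeGroup

variable {α : Type*}

/-- Inverse of a letter `(x, b)` in the alphabet `A ∪ A⁻¹`. -/
def linv (x : α × Bool) : α × Bool := (x.1, !x.2)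

/-- The boundary `∂F(A)`: infinite reduced words over `A ∪ A⁻¹`. -/
def Bd (α : Type*) : Type _ := {ξ : ℕ → α × Bool // ∀ n, ξ (n + 1) ≠ linv (ξ n)}

/-- The cylinder `C¹_w` of all infinite reduced words with prefix `w`. -/
def Cyl (w : List (α × Bool)) : Set (Bd α) :=
  {ξ | ∀ i, (h : i < w.length) → ξ.1 i = w.get ⟨i, h⟩}

/-- The length-`m` prefix of an infinite reduced word. -/
def pre (ξ : Bd α) (m : ℕ) : List (α × Bool) := List.ofFn (fun i : Fin m => ξ.1 i)

/-- `Φ` is the boundary extension of the automorphism `φ`: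
for every `ξ ∈ ∂F(A)`, the reduced words `φ(ξ|_m)` converge to `Φ ξ`. -/
def ExtendsBd [DecidableEq α] (φ : FreeGroup α ≃* FreeGroup α) (Φ : Bd α → Bd α) : Prop :=
  ∀ ξ : Bd α, ∀ k : ℕ, ∃ n : ℕ, ∀ m, n ≤ m →
    ((φ (FreeGroup.mk (pre ξ m))).toWord).take k = List.ofFn (fun i : Fin k => (Φ ξ).1 i)

/-- `Concat g ξ η` : `η` is the reduced concatenation `g · ξ` (left translation of a
boundary point by a group element): some terminal segment of (the reduced word of) `g`
cancels against an initial segment of `ξ`, and `η` is the concatenation of the rest. -/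
def Concat [DecidableEq α] (g : FreeGroup α) (ξ η : Bd α) : Prop :=
  ∃ ℓ : ℕ, ∃ hℓ : ℓ ≤ g.toWord.length,
    (∀ i, (h : i < ℓ) → ξ.1 i = linv (g.toWord.get ⟨g.toWord.length - 1 - i, by omega⟩)) ∧
    (∀ n : ℕ, η.1 n =
      if h : n < g.toWord.length - ℓ then g.toWord.get ⟨n, by omega⟩
      else ξ.1 (n - (g.toWord.length - ℓ) + ℓ))

/-- The vertex `g` of the Cayley tree lies on the bi-infinite geodesic from `ξ` to `η`. -/
def OnGeod [DecidableEq α] (g : FreeGroup α) (ξ η : Bd α) : Prop :=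
  ∃ ξ' η' : Bd α, Concat g⁻¹ ξ ξ' ∧ Concat g⁻¹ η η' ∧ ξ'.1 0 ≠ η'.1 0

/-- The double cylinder `C²_{[v,w]}`. -/
def DblCyl [DecidableEq α] (v w : FreeGroup α) : Set (Bd α × Bd α) :=
  {p | p.1 ≠ p.2 ∧ OnGeod v p.1 p.2 ∧ OnGeod w p.1 p.2}

/-- Letter-permuting automorphism: every generator maps to a single letter. -/
def IsPermAut [DecidableEq α] (φ : FreeGroup α ≃* FreeGroup α) : Prop :=
  ∀ x : α, ((φ (FreeGroup.of x)).toWord).length = 1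

/-- Elementary Nielsen automorphism: `a ↦ ab`, all other generators fixed. -/
def IsNielsenAut (φ : FreeGroup α ≃* FreeGroup α) : Prop :=
  ∃ a b : α, a ≠ b ∧ φ (FreeGroup.of a) = FreeGroup.of a * FreeGroup.of b ∧
    ∀ x : α, x ≠ a → φ (FreeGroup.of x) = FreeGroup.of x


namespace NAux

variable {α : Type*} [DecidableEq α]

/-- A word with no adjacent cancelling pair. -/
def Rd (l : List (α × Bool)) : Prop := List.IsChain (fun x y => y ≠ linv x) l

@[simp] lemma linv_inv_tmp (x : α × Bool) : linv (linv x) = x := by simp [linv]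

variable (a b : α) (ε : Bool)

def sb (x : α × Bool) : List (α × Bool) :=
  if x = (a, true) then [(a, true), (b, ε)]
  else if x = (a, false) then [(b, !ε), (a, false)]
  else [x]

def N : List (α × Bool) → List (α × Bool)
  | [] => []
  | [x] => sb a b ε x
  | x :: y :: t =>
    if x = (a, true) ∧ y = (b, !ε) then (a, true) :: N t
    else if x = (b, ε) ∧ y = (a, false) then (a, false) :: N t
    else sb a b ε x ++ N (y :: t)

lemma N_nil : N a b ε [] = [] := rfl
lemma N_one (x : α × Bool) : N a b ε [x] = sb a b ε x := rfl
lemma N_cons (x y : α × Bool) (t : List (α × Bool)) : N a b ε (x :: y :: t) =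
    if x = (a, true) ∧ y = (b, !ε) then (a, true) :: N a b ε t
    else if x = (b, ε) ∧ y = (a, false) then (a, false) :: N a b ε t
    else sb a b ε x ++ N a b ε (y :: t) := rfl

lemma sb_ne_nil (x : α × Bool) : sb a b ε x ≠ [] := by
  unfold sb; split_ifs <;> simp

lemma N_ne_nil : ∀ l : List (α × Bool), l ≠ [] → N a b ε l ≠ []
  | [], h => absurd rfl h
  | [x], _ => by rw [N_one]; exact sb_ne_nil a b ε x
  | x :: y :: t, _ => by
    rw [N_cons]; split_ifs <;> simp [sb_ne_nil a b ε x]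

lemma two_len : ∀ l : List (α × Bool), l.length ≤ 2 * (N a b ε l).length
  | [] => by simp [N_nil]
  | [x] => by
    rw [N_one]
    have : 1 ≤ (sb a b ε x).length := List.length_pos_iff.mpr (sb_ne_nil a b ε x)
    simp only [List.length_cons, List.length_nil]
    omega
  | x :: y :: t => by
    rw [N_cons]
    have h1 := two_len t
    have h2 := two_len (y :: t)
    have h3 : 1 ≤ (sb a b ε x).length := List.length_pos_iff.mpr (sb_ne_nil a b ε x)
    split_ifs <;> simp only [List.length_cons, List.length_append] <;>
      simp only [List.length_cons] at h2 ⊢ <;> omega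

def hdN : List (α × Bool) → α × Bool
  | [] => (a, true)
  | x :: t =>
    if x = (a, false) then (b, !ε)
    else if x = (b, ε) ∧ t.head? = some (a, false) then (a, false)
    else x

lemma hdN_cons (x : α × Bool) (t : List (α × Bool)) :
    hdN a b ε (x :: t) = if x = (a, false) then (b, !ε)
      else if x = (b, ε) ∧ t.head? = some (a, false) then (a, false) else x := rfl

variable {a b}

lemma sb_head (hab : a ≠ b) (x : α × Bool) (c : Option (α × Bool))
    (hc : c = some (a, false) → x ≠ (b, ε)) :
    (sb a b ε x).head? = some
      (if x = (a, false) then (b, !ε) else if x = (b, ε) ∧ c = some (a, false) then (a, false)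
       else x) := by
  have hba : b ≠ a := hab.symm
  unfold sb
  by_cases h1 : x = (a, true)
  · subst h1
    rw [if_pos rfl, if_neg (by simp), if_neg (by simp [hab])]
    rfl
  · rw [if_neg h1]
    by_cases h2 : x = (a, false)
    · subst h2
      rw [if_pos rfl, if_pos rfl]; rfl
    · rw [if_neg h2, if_neg h2]
      rw [if_neg ?_]
      · rfl
      · rintro ⟨rfl, hc'⟩; exact hc hc' rfl

lemma head_N (hab : a ≠ b) : ∀ l : List (α × Bool), l ≠ [] →
    (N a b ε l).head? = some (hdN a b ε l)
  | [], h => absurd rfl h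
  | [x], _ => by
    rw [N_one, hdN_cons]
    exact sb_head ε hab x none (by simp)
  | x :: y :: t, _ => by
    have hba : b ≠ a := hab.symm
    rw [N_cons, hdN_cons]
    by_cases h1 : x = (a, true) ∧ y = (b, !ε)
    · rw [if_pos h1]
      obtain ⟨rfl, rfl⟩ := h1
      rw [if_neg (by simp), if_neg (by simp [hab])]
      rfl
    · rw [if_neg h1]
      by_cases h2 : x = (b, ε) ∧ y = (a, false)
      · rw [if_pos h2]
        obtain ⟨rfl, rfl⟩ := h2
        rw [if_neg (by simp [hba]), if_pos (by simp)]
        rfl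
      · rw [if_neg h2, List.head?_append_of_ne_nil _ (sb_ne_nil a b ε x)]
        exact sb_head ε hab x ((y :: t).head?) (by rintro hy rfl; simp at hy; exact h2 ⟨rfl, hy⟩)

lemma sb_getLast (x : α × Bool) :
    (sb a b ε x).getLast? = some (if x = (a, true) then (b, ε) else x) := by
  unfold sb
  split_ifs with h1 h2 <;> simp_all

lemma rd_sb (hab : a ≠ b) (x : α × Bool) : Rd (sb a b ε x) := by
  have hba : b ≠ a := hab.symm
  unfold Rd sb
  split_ifs <;> simp [List.isChain_pair, linv, Prod.ext_iff, hab, hba]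

lemma hdN_ne_af (hab : a ≠ b) (z : α × Bool) (t : List (α × Bool)) (hz : z ≠ (b, ε)) :
    hdN a b ε (z :: t) ≠ (a, false) := by
  rw [hdN_cons]
  by_cases h1 : z = (a, false)
  · rw [if_pos h1]; simp [Ne.symm hab]
  · rw [if_neg h1, if_neg (by rintro ⟨rfl, -⟩; exact hz rfl)]
    exact h1

lemma hdN_ne_at (hab : a ≠ b) (z : α × Bool) (t : List (α × Bool)) (hz : z ≠ (a, true)) :
    hdN a b ε (z :: t) ≠ (a, true) := by
  rw [hdN_cons]
  by_cases h1 : z = (a, false)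
  · rw [if_pos h1]; simp [Ne.symm hab]
  · rw [if_neg h1]
    split_ifs with h2
    · simp
    · exact hz

lemma hdN_ne_bf (hab : a ≠ b) (z : α × Bool) (t : List (α × Bool)) (hz1 : z ≠ (a, false))
    (hz2 : z ≠ (b, !ε)) : hdN a b ε (z :: t) ≠ (b, !ε) := by
  rw [hdN_cons]
  rw [if_neg hz1]
  split_ifs with h2
  · simp [hab]
  · exact hz2

lemma hdN_ne_linv (z : α × Bool) (t : List (α × Bool)) (x : α × Bool) (hxz : z ≠ linv x)
    (hx1 : x ≠ (a, true)) (hx2 : ¬(x = (b, ε) ∧ z = (a, false))) :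
    hdN a b ε (z :: t) ≠ linv x := by
  rw [hdN_cons]
  by_cases h1 : z = (a, false)
  · rw [if_pos h1]
    intro hc
    exact hx2 ⟨by rw [← linv_inv_tmp x, ← hc]; simp [linv], h1⟩
  · rw [if_neg h1]
    split_ifs with h2
    · intro hc
      exact hx1 (by rw [← linv_inv_tmp x, ← hc]; simp [linv])
    · exact hxz

lemma red_N (hab : a ≠ b) : ∀ l : List (α × Bool), Rd l → Rd (N a b ε l) := by
  have hba : b ≠ a := hab.symm
  intro l
  induction l using N.induct a b ε with
  | case1 => intro _; simp [N_nil, Rd]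
  | case2 x => intro _; rw [N_one]; exact rd_sb ε hab x
  | case3 x y t h1 ih =>
    intro hl
    obtain ⟨rfl, rfl⟩ := h1
    rw [N_cons, if_pos ⟨rfl, rfl⟩]
    have hyt : Rd ((b, !ε) :: t) := (List.isChain_cons.mp hl).2
    have ht : Rd t := (List.isChain_cons.mp hyt).2
    rw [Rd, List.isChain_cons]
    refine ⟨?_, ih ht⟩
    cases t with
    | nil => simp [N_nil]
    | cons z t' =>
      rw [head_N ε hab _ (by simp)]
      intro q hq
      simp only [Option.mem_some_iff] at hq
      subst hq
      have hz : z ≠ (b, ε) := by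
        have := (List.isChain_cons_cons.mp hyt).1
        simpa [linv] using this
      have : linv ((a : α), true) = (a, false) := by simp [linv]
      rw [this]
      exact hdN_ne_af ε hab z t' hz
  | case4 x y t h1 h2 ih =>
    intro hl
    obtain ⟨rfl, rfl⟩ := h2
    rw [N_cons, if_neg h1, if_pos ⟨rfl, rfl⟩]
    have hyt : Rd ((a, false) :: t) := (List.isChain_cons.mp hl).2
    have ht : Rd t := (List.isChain_cons.mp hyt).2
    rw [Rd, List.isChain_cons]
    refine ⟨?_, ih ht⟩
    cases t with
    | nil => simp [N_nil]
    | cons z t' =>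
      rw [head_N ε hab _ (by simp)]
      intro q hq
      simp only [Option.mem_some_iff] at hq
      subst hq
      have hz : z ≠ (a, true) := by
        have := (List.isChain_cons_cons.mp hyt).1
        simpa [linv] using this
      have : linv ((a : α), false) = (a, true) := by simp [linv]
      rw [this]
      exact hdN_ne_at ε hab z t' hz
  | case5 x y t h1 h2 ih =>
    intro hl
    rw [N_cons, if_neg h1, if_neg h2]
    have hyx : y ≠ linv x := (List.isChain_cons_cons.mp hl).1
    have hyt : Rd (y :: t) := (List.isChain_cons_cons.mp hl).2
    rw [Rd, List.isChain_append]
    refine ⟨rd_sb ε hab x, ih hyt, ?_⟩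
    intro p hp q hq
    rw [sb_getLast] at hp
    rw [head_N ε hab _ (by simp)] at hq
    simp only [Option.mem_some_iff] at hp hq
    subst hp hq
    by_cases hx : x = (a, true)
    · rw [if_pos hx]
      subst hx
      have : linv ((b : α), ε) = (b, !ε) := by simp [linv]
      rw [this]
      refine hdN_ne_bf ε hab y t ?_ ?_
      · intro hy; rw [hy] at hyx; exact hyx (by simp [linv])
      · intro hy; exact h1 ⟨rfl, hy⟩
    · rw [if_neg hx]
      refine hdN_ne_linv ε y t x hyx hx ?_
      intro ⟨hxb, hya⟩; exact h2 ⟨hxb, hya⟩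


lemma self_eq_dropLast_append (l : List (α × Bool)) : ∃ r, l = l.dropLast ++ r := by
  rcases eq_or_ne l [] with rfl | h
  · exact ⟨[], rfl⟩
  · exact ⟨[l.getLast h], (List.dropLast_concat_getLast h).symm⟩

lemma stab (hab : a ≠ b) : ∀ u v : List (α × Bool), ∃ r, N a b ε (u ++ v) = (N a b ε u).dropLast ++ r := by
  intro u
  induction u using N.induct a b ε with
  | case1 => intro v; exact ⟨N a b ε v, by simp [N_nil]⟩
  | case2 x =>
    intro v
    cases v with
    | nil => simpa using self_eq_dropLast_append (N a b ε [x])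
    | cons y t =>
      rw [List.singleton_append, N_cons, N_one]
      by_cases h1 : x = (a, true) ∧ y = (b, !ε)
      · rw [if_pos h1]
        obtain ⟨rfl, -⟩ := h1
        refine ⟨N a b ε t, ?_⟩
        rw [show sb a b ε (a, true) = [(a, true), (b, ε)] from by simp [sb]]
        rfl
      · rw [if_neg h1]
        by_cases h2 : x = (b, ε) ∧ y = (a, false)
        · rw [if_pos h2]
          obtain ⟨rfl, -⟩ := h2
          refine ⟨(a, false) :: N a b ε t, ?_⟩
          rw [show sb a b ε (b, ε) = [(b, ε)] from ?_]
          · rfl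
          · unfold sb
            rw [if_neg (by rintro h; simp [Prod.ext_iff] at h; exact hab h.1.symm),
              if_neg (by rintro h; simp [Prod.ext_iff] at h; exact hab h.1.symm)]
        · rw [if_neg h2]
          obtain ⟨r, hr⟩ := self_eq_dropLast_append (sb a b ε x)
          exact ⟨r ++ N a b ε (y :: t), by rw [← List.append_assoc, ← hr]⟩
  | case3 x y t h1 ih =>
    intro v
    obtain ⟨rfl, rfl⟩ := h1
    obtain ⟨r, hr⟩ := ih v
    rw [List.cons_append, List.cons_append, N_cons, if_pos ⟨rfl, rfl⟩, N_cons,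
      if_pos ⟨rfl, rfl⟩, hr]
    rcases eq_or_ne (N a b ε t) [] with hnil | hne
    · exact ⟨(a, true) :: (N a b ε t).dropLast ++ r, by simp [hnil]⟩
    · exact ⟨r, by rw [List.dropLast_cons_of_ne_nil hne]; rfl⟩
  | case4 x y t h1 h2 ih =>
    intro v
    obtain ⟨rfl, rfl⟩ := h2
    obtain ⟨r, hr⟩ := ih v
    rw [List.cons_append, List.cons_append, N_cons, if_neg h1, if_pos ⟨rfl, rfl⟩, N_cons,
      if_neg h1, if_pos ⟨rfl, rfl⟩, hr]
    rcases eq_or_ne (N a b ε t) [] with hnil | hne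
    · exact ⟨(a, false) :: (N a b ε t).dropLast ++ r, by simp [hnil]⟩
    · exact ⟨r, by rw [List.dropLast_cons_of_ne_nil hne]; rfl⟩
  | case5 x y t h1 h2 ih =>
    intro v
    obtain ⟨r, hr⟩ := ih v
    rw [List.cons_append, List.cons_append, N_cons, if_neg h1, if_neg h2, N_cons, if_neg h1,
      if_neg h2, ← List.cons_append, hr]
    refine ⟨r, ?_⟩
    rw [List.dropLast_append_of_ne_nil (N_ne_nil a b ε _ (by simp)), List.append_assoc]

lemma N_append_at (hab : a ≠ b) :
    ∀ u t' : List (α × Bool), N a b ε (u ++ (a, true) :: t') =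
      N a b ε u ++ N a b ε ((a, true) :: t') := by
  intro u
  induction u using N.induct a b ε with
  | case1 => intro t'; simp [N_nil]
  | case2 x =>
    intro t'
    have c1 : ¬(x = (a, true) ∧ ((a : α), true) = (b, !ε)) := by
      rintro ⟨-, h⟩; simp [Prod.ext_iff, hab] at h
    have c2 : ¬(x = (b, ε) ∧ ((a : α), true) = (a, false)) := by
      rintro ⟨-, h⟩; simp [Prod.ext_iff] at h
    rw [List.singleton_append, N_cons, if_neg c1, if_neg c2, N_one]
  | case3 x y t h1 ih =>
    intro t'
    obtain ⟨rfl, rfl⟩ := h1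
    rw [List.cons_append, List.cons_append, N_cons, if_pos ⟨rfl, rfl⟩, N_cons,
      if_pos ⟨rfl, rfl⟩, ih, List.cons_append]
  | case4 x y t h1 h2 ih =>
    intro t'
    obtain ⟨rfl, rfl⟩ := h2
    rw [List.cons_append, List.cons_append, N_cons, if_neg h1, if_pos ⟨rfl, rfl⟩, N_cons,
      if_neg h1, if_pos ⟨rfl, rfl⟩, ih, List.cons_append]
  | case5 x y t h1 h2 ih =>
    intro t'
    rw [List.cons_append, List.cons_append, N_cons, if_neg h1, if_neg h2, N_cons, if_neg h1,
      if_neg h2, ← List.cons_append, ih, List.append_assoc]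

lemma last_N (hab : a ≠ b) : ∀ u : List (α × Bool),
    (N a b ε u).getLast? = some (a, false) → u.getLast? = some (a, false) := by
  intro u
  induction u using N.induct a b ε with
  | case1 => simp [N_nil]
  | case2 x =>
    rw [N_one]
    unfold sb
    split_ifs with hx1 hx2 <;> intro h <;> simp_all [Prod.ext_iff] <;> simp_all [hab]
  | case3 x y t h1 ih =>
    obtain ⟨rfl, rfl⟩ := h1
    rw [N_cons, if_pos ⟨rfl, rfl⟩]
    rcases eq_or_ne t [] with rfl | hne
    · simp [N_nil]
    · have h2 : N a b ε t ≠ [] := N_ne_nil a b ε t hne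
      intro h
      rw [show (a, true) :: N a b ε t = [(a, true)] ++ N a b ε t from rfl,
        List.getLast?_append_of_ne_nil _ h2] at h
      rw [show (a, true) :: (b, !ε) :: t = [(a, true), (b, !ε)] ++ t from rfl,
        List.getLast?_append_of_ne_nil _ hne]
      exact ih h
  | case4 x y t h1 h2 ih =>
    obtain ⟨rfl, rfl⟩ := h2
    rw [N_cons, if_neg h1, if_pos ⟨rfl, rfl⟩]
    rcases eq_or_ne t [] with rfl | hne
    · simp [N_nil]
    · have h2' : N a b ε t ≠ [] := N_ne_nil a b ε t hne
      intro h
      rw [show (a, false) :: N a b ε t = [(a, false)] ++ N a b ε t from rfl,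
        List.getLast?_append_of_ne_nil _ h2'] at h
      rw [show (b, ε) :: (a, false) :: t = [(b, ε), (a, false)] ++ t from rfl,
        List.getLast?_append_of_ne_nil _ hne]
      exact ih h
  | case5 x y t h1 h2 ih =>
    rw [N_cons, if_neg h1, if_neg h2]
    intro h
    rw [List.getLast?_append_of_ne_nil _ (N_ne_nil a b ε _ (by simp))] at h
    rw [show x :: y :: t = [x] ++ y :: t from rfl,
      List.getLast?_append_of_ne_nil _ (by simp)]
    exact ih h

/-- A reduced word is a fixed point of `reduce`. -/
lemma reduce_eq_self : ∀ l : List (α × Bool), Rd l → reduce l = l := by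
  intro l
  induction l with
  | nil => intro _; rfl
  | cons x t ih =>
    intro h
    have ht : Rd t := List.IsChain.tail h
    rw [reduce.cons, ih ht]
    cases t with
    | nil => rfl
    | cons y t' =>
      have hxy : y ≠ linv x := (List.isChain_cons_cons.mp h).1
      simp only []
      rw [if_neg]
      rintro ⟨h1, h2⟩
      apply hxy
      rw [linv, h1, h2, Bool.not_not]

lemma rd_of_not_infix : ∀ l : List (α × Bool),
    (∀ (L₂ L₃ : List (α × Bool)) (x : α) (c : Bool), l ≠ L₂ ++ (x, c) :: (x, !c) :: L₃) →
    Rd l := by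
  intro l
  induction l with
  | nil => intro _; simp [Rd]
  | cons x t ih =>
    intro h
    cases t with
    | nil => simp [Rd]
    | cons y t' =>
      rw [Rd, List.isChain_cons_cons]
      constructor
      · intro hy
        exact h [] t' x.1 x.2 (by rw [hy]; simp [linv])
      · exact ih fun L₂ L₃ z c hz => h (x :: L₂) L₃ z c (by rw [hz]; rfl)

lemma rd_reduce (l : List (α × Bool)) : Rd (reduce l) :=
  rd_of_not_infix _ fun L₂ L₃ x c h => reduce.not h

lemma rd_toWord (g : FreeGroup α) : Rd g.toWord := by
  rw [← reduce_toWord]; exact rd_reduce _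

lemma toWord_mk_rd {l : List (α × Bool)} (h : Rd l) : (FreeGroup.mk l).toWord = l := by
  rw [toWord_mk, reduce_eq_self _ h]

lemma mk_single_true (z : α) : FreeGroup.mk [(z, true)] = FreeGroup.of z := rfl

lemma mk_single_false (z : α) : FreeGroup.mk [(z, false)] = (FreeGroup.of z)⁻¹ := by
  rw [FreeGroup.of, FreeGroup.inv_mk]
  simp [FreeGroup.invRev]

lemma mk_pair_cancel (z : α) (c : Bool) :
    FreeGroup.mk [(z, c)] * FreeGroup.mk [(z, !c)] = 1 := by
  cases c
  · rw [mk_single_false, show ((z, !false) : α × Bool) = (z, true) from rfl, mk_single_true]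
    exact inv_mul_cancel _
  · rw [mk_single_true, show ((z, !true) : α × Bool) = (z, false) from rfl, mk_single_false]
    exact mul_inv_cancel _

/-- homomorphism computation -/
lemma hom_mk_N (e : FreeGroup α →* FreeGroup α) (hab : a ≠ b)
    (ha : e (FreeGroup.of a) = FreeGroup.mk [(a, true), (b, ε)])
    (hx : ∀ x : α, x ≠ a → e (FreeGroup.of x) = FreeGroup.of x) :
    ∀ l : List (α × Bool), e (FreeGroup.mk l) = FreeGroup.mk (N a b ε l) := by
  have single : ∀ x : α × Bool, e (FreeGroup.mk [x]) = FreeGroup.mk (sb a b ε x) := by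
    intro x
    by_cases h1 : x = (a, true)
    · subst h1
      rw [show sb a b ε (a, true) = [(a, true), (b, ε)] from by unfold sb; rw [if_pos rfl],
        mk_single_true, ha]
    · by_cases h2 : x = (a, false)
      · subst h2
        rw [show sb a b ε (a, false) = [(b, !ε), (a, false)] from by
            unfold sb; rw [if_neg h1, if_pos rfl],
          mk_single_false, _root_.map_inv, ha, FreeGroup.inv_mk]
        simp [FreeGroup.invRev]
      · rw [show sb a b ε x = [x] from by unfold sb; rw [if_neg h1, if_neg h2]]
        rcases x with ⟨z, c⟩
        have hz : z ≠ a := by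
          rintro rfl
          cases c
          · exact h2 rfl
          · exact h1 rfl
        cases c
        · rw [mk_single_false, _root_.map_inv, hx z hz]
        · rw [mk_single_true, hx z hz]
  intro l
  induction l using N.induct a b ε with
  | case1 =>
    rw [N_nil, ← FreeGroup.one_eq_mk]
    exact map_one e
  | case2 x => rw [N_one]; exact single x
  | case3 x y t h1 ih =>
    obtain ⟨rfl, rfl⟩ := h1
    rw [N_cons, if_pos ⟨rfl, rfl⟩]
    have hsplit : FreeGroup.mk ((a, true) :: (b, !ε) :: t) =
        FreeGroup.mk [(a, true)] * FreeGroup.mk [(b, !ε)] * FreeGroup.mk t := by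
      rw [FreeGroup.mul_mk, FreeGroup.mul_mk]; rfl
    have hsa : sb a b ε (a, true) = [(a, true), (b, ε)] := by unfold sb; rw [if_pos rfl]
    have hsb' : sb a b ε (b, !ε) = [(b, !ε)] := by
      unfold sb
      rw [if_neg (by simp [Prod.ext_iff, Ne.symm hab]),
        if_neg (by simp [Prod.ext_iff, Ne.symm hab])]
    have key : FreeGroup.mk [(a, true), (b, ε)] * FreeGroup.mk [(b, !ε)] =
        FreeGroup.mk [(a, true)] := by
      rw [show FreeGroup.mk [(a, true), (b, ε)] =
          FreeGroup.mk [(a, true)] * FreeGroup.mk [(b, ε)] from by rw [FreeGroup.mul_mk]; rfl,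
        mul_assoc, mk_pair_cancel b ε, mul_one]
    rw [hsplit, _root_.map_mul, _root_.map_mul, single, single, ih, hsa, hsb', key,
      FreeGroup.mul_mk]
    rfl
  | case4 x y t h1 h2 ih =>
    obtain ⟨rfl, rfl⟩ := h2
    rw [N_cons, if_neg h1, if_pos ⟨rfl, rfl⟩]
    have hsplit : FreeGroup.mk ((b, ε) :: (a, false) :: t) =
        FreeGroup.mk [(b, ε)] * FreeGroup.mk [(a, false)] * FreeGroup.mk t := by
      rw [FreeGroup.mul_mk, FreeGroup.mul_mk]; rfl
    have hsb' : sb a b ε (b, ε) = [(b, ε)] := by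
      unfold sb
      rw [if_neg (by simp [Prod.ext_iff, Ne.symm hab]),
        if_neg (by simp [Prod.ext_iff, Ne.symm hab])]
    have hsa : sb a b ε (a, false) = [(b, !ε), (a, false)] := by
      unfold sb; rw [if_neg (by simp), if_pos rfl]
    have key : FreeGroup.mk [(b, ε)] * FreeGroup.mk [(b, !ε), (a, false)] =
        FreeGroup.mk [(a, false)] := by
      rw [show FreeGroup.mk [(b, !ε), (a, false)] =
          FreeGroup.mk [(b, !ε)] * FreeGroup.mk [(a, false)] from by rw [FreeGroup.mul_mk]; rfl,
        ← mul_assoc, mk_pair_cancel b ε, one_mul]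
    rw [hsplit, _root_.map_mul, _root_.map_mul, single, single, ih, hsa, hsb', key,
      FreeGroup.mul_mk]
    rfl
  | case5 x y t h1 h2 ih =>
    rw [N_cons, if_neg h1, if_neg h2]
    have : FreeGroup.mk (x :: y :: t) = FreeGroup.mk [x] * FreeGroup.mk (y :: t) := by
      rw [FreeGroup.mul_mk]; rfl
    rw [this, _root_.map_mul, single, ih, FreeGroup.mul_mk]


end NAux


namespace NAux

variable {α : Type*} [DecidableEq α]

lemma pre_length (ξ : Bd α) (m : ℕ) : (pre ξ m).length = m := by simp [pre]

lemma pre_getElem (ξ : Bd α) (m i : ℕ) (h : i < (pre ξ m).length) : (pre ξ m)[i] = ξ.1 i := by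
  simp [pre]

lemma rd_pre (ξ : Bd α) (m : ℕ) : Rd (pre ξ m) := by
  rw [Rd, List.isChain_iff_getElem]
  intro i h
  simpa [pre] using ξ.2 i

lemma pre_add (ξ : Bd α) (k d : ℕ) :
    pre ξ (k + d) = pre ξ k ++ List.ofFn (fun i : Fin d => ξ.1 (k + i)) := by
  rw [pre, List.ofFn_add]
  rfl

lemma pre_mono (ξ : Bd α) {k m : ℕ} (h : k ≤ m) : ∃ v, pre ξ m = pre ξ k ++ v := by
  obtain ⟨d, rfl⟩ : ∃ d, m = k + d := ⟨m - k, by omega⟩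
  exact ⟨_, pre_add ξ k d⟩

lemma pre_cyl {ξ : Bd α} {c : List (α × Bool)} (h : ξ ∈ Cyl c) : pre ξ c.length = c := by
  apply List.ext_getElem (by simp [pre])
  intro i h1 h2
  rw [pre_getElem]
  exact h i h2

lemma pre_cyl_split {ξ : Bd α} {c : List (α × Bool)} (h : ξ ∈ Cyl c) {m : ℕ}
    (hm : c.length ≤ m) : ∃ v, pre ξ m = c ++ v := by
  obtain ⟨v, hv⟩ := pre_mono ξ hm
  exact ⟨v, by rw [hv, pre_cyl h]⟩

lemma head_eq_cons {l : List (α × Bool)} {z : α × Bool} (h : l.head? = some z) :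
    ∃ t, l = z :: t := by
  cases l with
  | nil => simp at h
  | cons x t => simp at h; exact ⟨t, by rw [h]⟩

end NAux

/-- Nielsen automorphism `a ↦ ab`: image of the cylinder `C¹_{w·a}` is `C¹_{φ(w)·a}`. -/
theorem stmt0 [DecidableEq α] [Nontrivial α] (a b : α) (hab : a ≠ b)
    (φ : FreeGroup α ≃* FreeGroup α)
    (hφa : φ (FreeGroup.of a) = FreeGroup.of a * FreeGroup.of b)
    (hφ : ∀ x : α, x ≠ a → φ (FreeGroup.of x) = FreeGroup.of x)
    (Φ : Bd α → Bd α) (hΦ : ExtendsBd φ Φ)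
    (w : FreeGroup α)
    (hred : (w * FreeGroup.of a).toWord = w.toWord ++ [(a, true)]) :
    Φ '' Cyl ((w * FreeGroup.of a).toWord) = Cyl ((φ w * FreeGroup.of a).toWord) := by
  classical
  have hba : b ≠ a := hab.symm
  -- action of φ on arbitrary words
  have hf : ∀ l : List (α × Bool), φ (FreeGroup.mk l) = FreeGroup.mk (NAux.N a b true l) := by
    have ha1 : φ.toMonoidHom (FreeGroup.of a) = FreeGroup.mk [(a, true), (b, true)] := by
      show φ (FreeGroup.of a) = _
      rw [hφa, ← NAux.mk_single_true a, ← NAux.mk_single_true b, FreeGroup.mul_mk]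
      rfl
    have hx1 : ∀ x : α, x ≠ a → φ.toMonoidHom (FreeGroup.of x) = FreeGroup.of x :=
      fun x hx => hφ x hx
    intro l
    exact NAux.hom_mk_N true φ.toMonoidHom hab ha1 hx1 l
  -- action of φ.symm on arbitrary words
  have hg : ∀ l : List (α × Bool),
      φ.symm (FreeGroup.mk l) = FreeGroup.mk (NAux.N a b false l) := by
    have ha1 : φ.symm.toMonoidHom (FreeGroup.of a) = FreeGroup.mk [(a, true), (b, false)] := by
      show φ.symm (FreeGroup.of a) = _
      rw [MulEquiv.symm_apply_eq]
      have h2 : FreeGroup.mk [(a, true), (b, false)] =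
          FreeGroup.of a * (FreeGroup.of b)⁻¹ := by
        rw [← NAux.mk_single_true a, ← NAux.mk_single_false b, FreeGroup.mul_mk]
        rfl
      rw [h2, _root_.map_mul, _root_.map_inv, hφa, hφ b hba, mul_inv_cancel_right]
    have hx1 : ∀ x : α, x ≠ a → φ.symm.toMonoidHom (FreeGroup.of x) = FreeGroup.of x := by
      intro x hx
      show φ.symm (FreeGroup.of x) = _
      rw [MulEquiv.symm_apply_eq, hφ x hx]
    intro l
    exact NAux.hom_mk_N false φ.symm.toMonoidHom hab ha1 hx1 l
  -- compositions
  have comp_gf : ∀ l, NAux.Rd l → NAux.N a b false (NAux.N a b true l) = l := by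
    intro l hl
    have h1 : FreeGroup.mk (NAux.N a b false (NAux.N a b true l)) = FreeGroup.mk l := by
      rw [← hg, ← hf, MulEquiv.symm_apply_apply]
    have h2 : NAux.Rd (NAux.N a b false (NAux.N a b true l)) :=
      NAux.red_N false hab _ (NAux.red_N true hab _ hl)
    rw [← NAux.toWord_mk_rd h2, h1, NAux.toWord_mk_rd hl]
  have comp_fg : ∀ l, NAux.Rd l → NAux.N a b true (NAux.N a b false l) = l := by
    intro l hl
    have h1 : FreeGroup.mk (NAux.N a b true (NAux.N a b false l)) = FreeGroup.mk l := by
      rw [← hf, ← hg, MulEquiv.apply_symm_apply]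
    have h2 : NAux.Rd (NAux.N a b true (NAux.N a b false l)) :=
      NAux.red_N true hab _ (NAux.red_N false hab _ hl)
    rw [← NAux.toWord_mk_rd h2, h1, NAux.toWord_mk_rd hl]
  -- basic facts about the words involved
  have hRdw : NAux.Rd w.toWord := NAux.rd_toWord w
  have hRdW : NAux.Rd (w.toWord ++ [(a, true)]) := by
    rw [← hred]; exact NAux.rd_toWord _
  have hlastw : w.toWord.getLast? ≠ some (a, false) := by
    intro hcon
    have h1 := (List.isChain_append.mp hRdW).2.2
    have h2 := h1 (a, false) hcon (a, true) (by simp)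
    exact h2 (by simp [linv])
  have hW' : (φ w * FreeGroup.of a).toWord = NAux.N a b true w.toWord ++ [(a, true)] := by
    have h1 : φ w * FreeGroup.of a =
        FreeGroup.mk (NAux.N a b true w.toWord ++ [(a, true)]) := by
      conv_lhs => rw [← FreeGroup.mk_toWord (x := w)]
      rw [hf, ← NAux.mk_single_true a, FreeGroup.mul_mk]
    rw [h1]
    apply NAux.toWord_mk_rd
    rw [NAux.Rd, List.isChain_append]
    refine ⟨NAux.red_N true hab _ hRdw, List.isChain_singleton _, ?_⟩
    intro p hp q hq
    simp only [List.head?_cons, Option.mem_some_iff] at hq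
    subst hq
    intro hcon
    have hp' : p = (a, false) := by
      rw [← NAux.linv_inv_tmp p, ← hcon]; simp [linv]
    subst hp'
    exact hlastw (NAux.last_N true hab w.toWord (by simpa using hp))
  -- the head of `N ε` applied to a word starting with (a, true)
  have hheadf : ∀ (ε : Bool) (v : List (α × Bool)),
      ∃ tl, NAux.N a b ε ((a, true) :: v) = (a, true) :: tl := by
    intro ε v
    apply NAux.head_eq_cons
    rw [NAux.head_N ε hab _ (by simp)]
    congr 1
    rw [NAux.hdN_cons]
    rw [if_neg (by simp), if_neg (by rintro ⟨h1, -⟩; simp [Prod.ext_iff, hab] at h1)]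
  ext η
  constructor
  · -- forward inclusion
    rintro ⟨ξ, hξ, rfl⟩
    obtain ⟨n0, hn0⟩ := hΦ ξ ((φ w * FreeGroup.of a).toWord).length
    set K := ((φ w * FreeGroup.of a).toWord).length with hK
    set m := max n0 (w.toWord.length + 1) with hm
    obtain ⟨v, hv⟩ := NAux.pre_cyl_split hξ
      (m := m) (by rw [hred, List.length_append]; simp; omega)
    rw [hred] at hv
    have hv2 : pre ξ m = w.toWord ++ ((a, true) :: v) := by
      rw [hv, List.append_assoc]; rfl
    have hsplit : NAux.N a b true (pre ξ m) =
        NAux.N a b true w.toWord ++ NAux.N a b true ((a, true) :: v) := by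
      rw [hv2]; exact NAux.N_append_at true hab w.toWord v
    obtain ⟨tl, htl⟩ := hheadf true v
    have htoword : (φ (FreeGroup.mk (pre ξ m))).toWord = NAux.N a b true (pre ξ m) := by
      rw [hf, NAux.toWord_mk_rd (NAux.red_N true hab _ (NAux.rd_pre ξ m))]
    have htake := hn0 m (le_max_left _ _)
    rw [htoword, hsplit, htl] at htake
    have hassoc : NAux.N a b true w.toWord ++ (a, true) :: tl =
        (NAux.N a b true w.toWord ++ [(a, true)]) ++ tl := by
      rw [List.append_assoc]; rfl
    rw [hassoc, List.take_left' (by rw [← hW', hK])] at htake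
    -- htake : N true w.toWord ++ [(a,true)] = ofFn (Φ ξ prefix)
    intro i hi
    have hget := List.get_of_eq (hW'.trans htake) ⟨i, hi⟩
    rw [List.get_ofFn] at hget
    rw [hget]
    rfl
  · -- backward inclusion
    intro hη
    have hlenG : ∀ M : ℕ, M ≤ 2 * (NAux.N a b false (pre η M)).length := by
      intro M
      have := NAux.two_len a b false (pre η M)
      rwa [NAux.pre_length] at this
    have hstab : ∀ M M' : ℕ, M ≤ M' → ∀ i : ℕ,
        ∀ hi : i + 1 < (NAux.N a b false (pre η M)).length,
        ∀ h' : i < (NAux.N a b false (pre η M')).length,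
        (NAux.N a b false (pre η M'))[i] = (NAux.N a b false (pre η M))[i]'(by omega) := by
      intro M M' hMM i hi h'
      obtain ⟨v, hv⟩ := NAux.pre_mono η hMM
      obtain ⟨r, hr⟩ := NAux.stab false hab (pre η M) v
      have e1 : NAux.N a b false (pre η M') =
          (NAux.N a b false (pre η M)).dropLast ++ r := by rw [hv, hr]
      have hlen : i < ((NAux.N a b false (pre η M)).dropLast).length := by
        rw [List.length_dropLast]; omega
      rw [List.getElem_of_eq e1 h', List.getElem_append_left hlen, List.getElem_dropLast]
    have hFlt : ∀ n : ℕ, n < (NAux.N a b false (pre η (2 * n + 4))).length := by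
      intro n; have := hlenG (2 * n + 4); omega
    set F : ℕ → α × Bool := fun n => (NAux.N a b false (pre η (2 * n + 4)))[n]'(hFlt n) with hF
    have hFst : ∀ n M : ℕ, 2 * n + 4 ≤ M → ∀ h : n < (NAux.N a b false (pre η M)).length,
        (NAux.N a b false (pre η M))[n] = F n := by
      intro n M hM h
      exact hstab (2 * n + 4) M hM n (by have := hlenG (2 * n + 4); omega) h
    have hFred : ∀ n, F (n + 1) ≠ linv (F n) := by
      intro n
      have hM := hlenG (2 * (n + 1) + 4)
      have h1 : n + 1 < (NAux.N a b false (pre η (2 * (n + 1) + 4))).length := by omega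
      have h0 : n < (NAux.N a b false (pre η (2 * (n + 1) + 4))).length := by omega
      rw [← hFst n _ (by omega) h0, ← hFst (n + 1) _ (by omega) h1]
      have hrd := NAux.red_N false hab _ (NAux.rd_pre η (2 * (n + 1) + 4))
      rw [NAux.Rd, List.isChain_iff_getElem] at hrd
      have := hrd n (by omega)
      simpa [List.get_eq_getElem] using this
    set ξ : Bd α := ⟨F, hFred⟩ with hξdef
    -- G M starts with W
    have hGW : ∀ M : ℕ, ((φ w * FreeGroup.of a).toWord).length ≤ M →
        ∃ tl, NAux.N a b false (pre η M) = (w.toWord ++ [(a, true)]) ++ tl := by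
      intro M hM
      obtain ⟨v, hv⟩ := NAux.pre_cyl_split hη hM
      rw [hW'] at hv
      have hv2 : pre η M = NAux.N a b true w.toWord ++ ((a, true) :: v) := by
        rw [hv, List.append_assoc]; rfl
      obtain ⟨tl, htl⟩ := hheadf false v
      refine ⟨tl, ?_⟩
      rw [hv2, NAux.N_append_at false hab _ v, comp_gf w.toWord hRdw, htl,
        List.append_assoc]
      rfl
    have hξW : ξ ∈ Cyl ((w * FreeGroup.of a).toWord) := by
      intro i hi
      have hi' : i < (w.toWord ++ [(a, true)]).length := by rw [← hred]; exact hi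
      set M := max (2 * i + 4) ((φ w * FreeGroup.of a).toWord).length with hMdef
      obtain ⟨tl, htl⟩ := hGW M (le_max_right _ _)
      have hilen : i < (NAux.N a b false (pre η M)).length := by
        rw [htl, List.length_append]
        omega
      have h1 : (NAux.N a b false (pre η M))[i] = F i :=
        hFst i M (le_max_left _ _) hilen
      have h3 : (w * FreeGroup.of a).toWord.get ⟨i, hi⟩ =
          (w.toWord ++ [(a, true)])[i]'hi' := by
        rw [List.get_eq_getElem]
        exact List.getElem_of_eq hred hi
      show F i = _
      rw [h3, ← h1]
      exact (List.getElem_of_eq htl hilen).trans (List.getElem_append_left hi')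
    refine ⟨ξ, hξW, ?_⟩
    apply Subtype.ext
    funext n
    obtain ⟨n0, hn0⟩ := hΦ ξ (n + 1)
    set m := max n0 (2 * (n + 1) + 2) with hmdef
    set M := 2 * m + 4 with hMdef
    have hGMlen : m + 2 ≤ (NAux.N a b false (pre η M)).length := by
      have := hlenG M; omega
    have hpre : pre ξ m = (NAux.N a b false (pre η M)).take m := by
      apply List.ext_getElem
      · rw [NAux.pre_length, List.length_take]; omega
      · intro i h1 h2
        rw [NAux.pre_getElem, List.getElem_take]
        have hi : i < m := by rw [NAux.pre_length] at h1; omega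
        show F i = _
        exact (hFst i M (by omega) (by omega)).symm
    have hcomp : NAux.N a b true (NAux.N a b false (pre η M)) = pre η M :=
      comp_fg _ (NAux.rd_pre η M)
    obtain ⟨r, hr⟩ := NAux.stab true hab ((NAux.N a b false (pre η M)).take m)
      ((NAux.N a b false (pre η M)).drop m)
    rw [List.take_append_drop m (NAux.N a b false (pre η M)), hcomp] at hr
    have hPlen : n + 2 ≤
        (NAux.N a b true ((NAux.N a b false (pre η M)).take m)).length := by
      have h1 := NAux.two_len a b true ((NAux.N a b false (pre η M)).take m)
      rw [List.length_take] at h1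
      have h2 : min m (NAux.N a b false (pre η M)).length = m := by omega
      rw [h2] at h1
      omega
    have htake1 : (pre η M).take (n + 1) =
        (NAux.N a b true ((NAux.N a b false (pre η M)).take m)).take (n + 1) := by
      conv_lhs => rw [hr]
      rw [List.take_append_of_le_length (by rw [List.length_dropLast]; omega),
        List.dropLast_eq_take, List.take_take, min_eq_left (by omega)]
    have htoword : (φ (FreeGroup.mk (pre ξ m))).toWord = NAux.N a b true (pre ξ m) := by
      rw [hf, NAux.toWord_mk_rd (NAux.red_N true hab _ (NAux.rd_pre ξ m))]
    have htake := hn0 m (le_max_left _ _)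
    rw [htoword, hpre] at htake
    have hfin : (pre η M).take (n + 1) = List.ofFn (fun i : Fin (n + 1) => (Φ ξ).1 i) := by
      rw [htake1, htake]
    have hpre2 : (pre η M).take (n + 1) = pre η (n + 1) := by
      obtain ⟨v, hv⟩ := NAux.pre_mono η (show n + 1 ≤ M by omega)
      rw [hv, List.take_append_of_le_length (by rw [NAux.pre_length]),
        List.take_of_length_le (by rw [NAux.pre_length])]
    have hfin2 : pre η (n + 1) = List.ofFn (fun i : Fin (n + 1) => (Φ ξ).1 i) := by
      rw [← hpre2, hfin]
    have hn1 : n < (pre η (n + 1)).length := by rw [NAux.pre_length]; omega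
    have h9 := List.get_of_eq hfin2 ⟨n, hn1⟩
    rw [List.get_ofFn] at h9
    have h10 : (pre η (n + 1)).get ⟨n, hn1⟩ = η.1 n := by
      rw [List.get_eq_getElem]
      exact NAux.pre_getElem η (n + 1) n hn1
    rw [h10] at h9
    exact h9.symm
end

section
/- Let U be a finite set of reduced words in F(A) with |A| ≥ 2. Then there exists a unique reduced subset U_min ⊆ F(A) of minimal cardinality such that the multi-cylinder C¹_{U_min} = ⋃_{u ∈ U_min} C¹_u equals C¹_U = ⋃_{u ∈ U} C¹_u. Here 'reduced subset' means: no element of U_min is a prefix of another element of U_min, and no subfamily of cylinders in the union can be replaced by a single strictly larger cylinder keeping the union equal. -/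
open FreeGroup

variable {α : Type*}

namespace Stmt8aux

/-- A word is reduced. -/
def Rd (w : List (α × Bool)) : Prop := List.Chain' (fun a b => b ≠ linv a) w

lemma rd_reduce_eq [DecidableEq α] : ∀ {w : List (α × Bool)}, Rd w → FreeGroup.reduce w = w
  | [], _ => rfl
  | [x], _ => rfl
  | x :: y :: t, h => by
    have ht : Rd (y :: t) := h.tail
    have hxy : y ≠ linv x := List.isChain_cons_cons.1 h |>.1
    have ih := rd_reduce_eq ht
    rw [FreeGroup.reduce.cons, ih]
    have : ¬ (x.1 = y.1 ∧ x.2 = !y.2) := by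
      rintro ⟨h1, h2⟩
      have h2' : y.2 = !x.2 := by rw [h2, Bool.not_not]
      exact hxy (Prod.ext h1.symm h2')
    simp [this]

lemma rd_toWord [DecidableEq α] (x : FreeGroup α) : Rd x.toWord := by
  by_contra h
  unfold Rd List.Chain' at h
  rw [List.isChain_iff_getElem] at h
  push_neg at h
  obtain ⟨i, hi, hif⟩ := h
  set L := x.toWord with hL
  have hd : L.drop i = L.get ⟨i, by omega⟩ :: L.get ⟨i+1, by omega⟩ :: L.drop (i+2) := by
    rw [List.drop_eq_getElem_cons (by omega)]
    congr 1
    rw [List.drop_eq_getElem_cons (by omega)]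
    rfl
  have hsplit : L = L.take i ++ L.get ⟨i, by omega⟩ :: L.get ⟨i+1, by omega⟩ :: L.drop (i+2) := by
    conv_lhs => rw [← List.take_append_drop i L, hd]
  have hred : FreeGroup.reduce L = L := FreeGroup.reduce_toWord x
  set a := L.get ⟨i, by omega⟩
  have : L.get ⟨i+1, by omega⟩ = (a.1, !a.2) := by exact hif
  rw [this] at hsplit
  exact FreeGroup.reduce.not (by rw [hred]; exact hsplit)

lemma toWord_mk_of_rd [DecidableEq α] {w : List (α × Bool)} (h : Rd w) :
    (FreeGroup.mk w).toWord = w := by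
  rw [FreeGroup.toWord_mk, rd_reduce_eq h]

lemma pre_length (ξ : Bd α) (m : ℕ) : (pre ξ m).length = m := by simp [pre]

lemma pre_eq_of_mem_Cyl {ξ : Bd α} {w : List (α × Bool)} (h : ξ ∈ Cyl w) :
    pre ξ w.length = w := by
  apply List.ext_get (by simp [pre])
  intro i h1 h2
  have : i < w.length := h2
  simp only [pre, List.get_ofFn]
  exact h i this

lemma pre_take (ξ : Bd α) {a b : ℕ} (hab : a ≤ b) : (pre ξ b).take a = pre ξ a := by
  apply List.ext_get (by simp [pre]; omega)
  intro i h1 h2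
  simp [pre, List.get_eq_getElem, List.getElem_take, List.getElem_ofFn]

lemma comparable {ξ : Bd α} {v w : List (α × Bool)} (hv : ξ ∈ Cyl v) (hw : ξ ∈ Cyl w) :
    v <+: w ∨ w <+: v := by
  rcases le_total v.length w.length with h | h
  · left
    rw [List.prefix_iff_eq_take, ← pre_eq_of_mem_Cyl hv, ← pre_eq_of_mem_Cyl hw,
      pre_length, pre_take ξ h]
  · right
    rw [List.prefix_iff_eq_take, ← pre_eq_of_mem_Cyl hv, ← pre_eq_of_mem_Cyl hw,
      pre_length, pre_take ξ h]

lemma Cyl_mono {v w : List (α × Bool)} (h : v <+: w) : Cyl w ⊆ Cyl v := by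
  intro ξ hξ i hi
  have hiw : i < w.length := lt_of_lt_of_le hi h.length_le
  have := hξ i hiw
  rw [this]
  simp only [List.get_eq_getElem]
  exact (h.getElem hi).symm


/-- a letter whose base differs from that of `x`. -/
noncomputable def nxt [Nontrivial α] (x : α × Bool) : α × Bool :=
  ((exists_ne x.1).choose, true)

lemma nxt_ne_linv [Nontrivial α] (x : α × Bool) : nxt x ≠ linv x := by
  intro h
  exact (exists_ne x.1).choose_spec (congrArg Prod.fst h)

noncomputable def ext [Nontrivial α] (w : List (α × Bool)) : ℕ → α × Bool
  | 0 => if h : 0 < w.length then w.get ⟨0, h⟩ else nxt (‹Nontrivial α›.exists_pair_ne.choose, true)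
  | n + 1 => if h : n + 1 < w.length then w.get ⟨n + 1, h⟩ else nxt (ext w n)

lemma ext_eq [Nontrivial α] (w : List (α × Bool)) {n : ℕ} (h : n < w.length) :
    ext w n = w.get ⟨n, h⟩ := by
  cases n with
  | zero => simp [ext, h]
  | succ n => simp [ext, h]

lemma ext_chain [Nontrivial α] {w : List (α × Bool)} (hw : Rd w) (n : ℕ) :
    ext w (n + 1) ≠ linv (ext w n) := by
  by_cases h : n + 1 < w.length
  · have h' : n < w.length := by omega
    rw [ext_eq w h, ext_eq w h']
    have := List.isChain_iff_getElem.1 hw n (by omega)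
    exact this
  · show (if h : n + 1 < w.length then w.get ⟨n + 1, h⟩ else nxt (ext w n)) ≠ _
    rw [dif_neg h]
    exact nxt_ne_linv _

lemma exists_mem_Cyl [Nontrivial α] {w : List (α × Bool)} (hw : Rd w) :
    ∃ ξ : Bd α, ξ ∈ Cyl w := by
  refine ⟨⟨ext w, ext_chain hw⟩, fun i hi => ext_eq w hi⟩

lemma exists_letter [Fintype α] [Nontrivial α] (x z : α × Bool) :
    ∃ y : α × Bool, y ≠ x ∧ y ≠ z := by
  classical
  have hcard : 4 ≤ Fintype.card (α × Bool) := by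
    rw [Fintype.card_prod, Fintype.card_bool]
    have := Fintype.one_lt_card (α := α)
    omega
  have hs : ({x, z} : Finset (α × Bool)).card ≤ 2 := Finset.card_insert_le _ _ |>.trans (by simp)
  have : (Finset.univ \ ({x, z} : Finset (α × Bool))).Nonempty := by
    rw [← Finset.card_pos, Finset.card_sdiff_of_subset (Finset.subset_univ _)]
    have : Fintype.card (α × Bool) = Finset.univ.card := rfl
    omega
  obtain ⟨y, hy⟩ := this
  rw [Finset.mem_sdiff, Finset.mem_insert, Finset.mem_singleton] at hy
  push_neg at hy
  exact ⟨y, hy.2⟩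

lemma exists_mem_Cyl_ne [Fintype α] [Nontrivial α] {w : List (α × Bool)} (hw : Rd w)
    (z : α × Bool) : ∃ ξ : Bd α, ξ ∈ Cyl w ∧ ξ.1 w.length ≠ z := by
  obtain ⟨y, hy1, hy2⟩ := exists_letter (linv (w.getLastD (z.1, true))) z
  have hrd : Rd (w ++ [y]) := by
    unfold Rd List.Chain'; rw [List.isChain_append]
    refine ⟨hw, List.isChain_singleton y, ?_⟩
    intro a ha b hb
    simp only [List.head?_cons, Option.mem_def, Option.some.injEq] at hb
    subst hb
    intro hlinv
    apply hy1
    rw [Option.mem_def] at ha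
    simp only [List.getLastD_eq_getLast?, ha, Option.getD_some]
    exact hlinv
  obtain ⟨ξ, hξ⟩ := exists_mem_Cyl hrd
  refine ⟨ξ, Cyl_mono (List.prefix_append w [y]) hξ, ?_⟩
  have := hξ w.length (by simp)
  rw [this]
  simpa using hy2



lemma subset_bi [DecidableEq α] {s : Finset (FreeGroup α)} {u : FreeGroup α} (hu : u ∈ s) :
    Cyl u.toWord ⊆ ⋃ v ∈ s, Cyl v.toWord :=
  Set.subset_iUnion₂ (s := fun v (_ : v ∈ s) => Cyl v.toWord) u hu

lemma mem_bi [DecidableEq α] {s : Finset (FreeGroup α)} {u : FreeGroup α} {ξ : Bd α}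
    (hu : u ∈ s) (hξ : ξ ∈ Cyl u.toWord) : ξ ∈ ⋃ v ∈ s, Cyl v.toWord :=
  subset_bi hu hξ

lemma mem_min_iff [DecidableEq α] [Fintype α] [Nontrivial α]
    (C : Set (Bd α)) (V : Finset (FreeGroup α))
    (hV : (⋃ u ∈ V, Cyl u.toWord) = C)
    (hmin : ∀ W : Finset (FreeGroup α), (⋃ u ∈ W, Cyl u.toWord) = C → V.card ≤ W.card)
    (v : FreeGroup α) :
    v ∈ V ↔ Cyl v.toWord ⊆ C ∧
      ∀ l : List (α × Bool), l <+: v.toWord → l.length < v.toWord.length → ¬ Cyl l ⊆ C := by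
  classical
  have hsubC : ∀ u ∈ V, Cyl u.toWord ⊆ C := by
    intro u hu
    rw [← hV]
    exact subset_bi hu
  have nonest : ∀ v₁ ∈ V, ∀ v₂ ∈ V, v₁ ≠ v₂ → ¬ (Cyl v₁.toWord ⊆ Cyl v₂.toWord) := by
    intro v₁ h1 v₂ h2 hne hsub
    have hU : (⋃ u ∈ V.erase v₁, Cyl u.toWord) = C := by
      rw [← hV]
      apply Set.Subset.antisymm
      · exact Set.iUnion₂_subset fun u hu => subset_bi (Finset.mem_of_mem_erase hu)
      · apply Set.iUnion₂_subset
        intro u hu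
        by_cases h : u = v₁
        · subst h
          exact hsub.trans (subset_bi (Finset.mem_erase.2 ⟨Ne.symm hne, h2⟩))
        · exact subset_bi (Finset.mem_erase.2 ⟨h, hu⟩)
    have h3 := hmin _ hU
    have h4 := Finset.card_erase_lt_of_mem h1
    omega
  have fwd : ∀ u ∈ V, ∀ l : List (α × Bool), l <+: u.toWord → l.length < u.toWord.length →
      ¬ Cyl l ⊆ C := by
    intro u hu l hpref hlen hsub
    have hrdl : Rd l := List.IsChain.prefix (rd_toWord u) hpref
    set g := FreeGroup.mk l with hgdef
    have hgw : g.toWord = l := toWord_mk_of_rd hrdl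
    set Vl := V.filter (fun v' => l <+: v'.toWord) with hVl
    have huVl : u ∈ Vl := Finset.mem_filter.2 ⟨hu, hpref⟩
    have covered : Cyl l ⊆ ⋃ v' ∈ Vl, Cyl v'.toWord := by
      intro ξ hξ
      have hξC : ξ ∈ C := hsub hξ
      rw [← hV] at hξC
      simp only [Set.mem_iUnion] at hξC
      obtain ⟨u', hu', hξu'⟩ := hξC
      rcases comparable hξ hξu' with h | h
      · exact mem_bi (Finset.mem_filter.2 ⟨hu', h⟩) hξu'
      · exfalso
        have hlen' : u'.toWord.length ≤ l.length := h.length_le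
        have hne : u ≠ u' := by
          intro e
          subst e
          omega
        exact nonest u hu u' hu' hne ((Cyl_mono hpref).trans (Cyl_mono h))
    have two : 2 ≤ Vl.card := by
      by_contra htwo
      push_neg at htwo
      have hone : ∀ x ∈ Vl, x = u := by
        intro x hx
        by_contra hxu
        have : 1 < Vl.card := Finset.one_lt_card.2 ⟨x, hx, u, huVl, hxu⟩
        omega
      obtain ⟨ξ, hξl, hξne⟩ := exists_mem_Cyl_ne hrdl (u.toWord.get ⟨l.length, hlen⟩)
      have hξm := covered hξl
      simp only [Set.mem_iUnion] at hξm
      obtain ⟨x, hx, hξx⟩ := hξm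
      rw [hone x hx] at hξx
      exact hξne (hξx l.length hlen)
    set V' := insert g (V.filter (fun v' => ¬ l <+: v'.toWord)) with hV'
    have hcards : (V.filter (fun v' => ¬ l <+: v'.toWord)).card + Vl.card = V.card := by
      rw [hVl, add_comm]
      exact Finset.card_filter_add_card_filter_not (p := fun v' : FreeGroup α => l <+: v'.toWord)
    have hunion : (⋃ u' ∈ V', Cyl u'.toWord) = C := by
      apply Set.Subset.antisymm
      · apply Set.iUnion₂_subset
        intro u' hu'
        rcases Finset.mem_insert.1 hu' with rfl | hmem
        · rw [hgw]; exact hsub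
        · exact hsubC u' (Finset.mem_filter.1 hmem).1
      · rw [← hV]
        apply Set.iUnion₂_subset
        intro u' hu'
        by_cases hp : l <+: u'.toWord
        · intro ξ hξ
          exact mem_bi (Finset.mem_insert_self g _) (by rw [hgw]; exact Cyl_mono hp hξ)
        · exact subset_bi (Finset.mem_insert_of_mem (Finset.mem_filter.2 ⟨hu', hp⟩))
    have hc1 : V'.card ≤ (V.filter (fun v' => ¬ l <+: v'.toWord)).card + 1 :=
      Finset.card_insert_le _ _
    have hc2 := hmin V' hunion
    omega
  constructor
  · intro hv
    exact ⟨hsubC v hv, fwd v hv⟩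
  · rintro ⟨hsub, hmax⟩
    by_contra hv
    obtain ⟨ξ, hξ⟩ := exists_mem_Cyl (rd_toWord v)
    have hξC : ξ ∈ C := hsub hξ
    rw [← hV] at hξC
    simp only [Set.mem_iUnion] at hξC
    obtain ⟨u, hu, hξu⟩ := hξC
    rcases comparable hξu hξ with h | h
    · rcases eq_or_lt_of_le h.length_le with he | hlt
      · have : u = v := FreeGroup.toWord_injective (h.eq_of_length he)
        exact hv (this ▸ hu)
      · exact hmax u.toWord h hlt (hsubC u hu)
    · rcases eq_or_lt_of_le h.length_le with he | hlt
      · have : v = u := FreeGroup.toWord_injective (h.eq_of_length he)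
        exact hv (this ▸ hu)
      · exact fwd u hu v.toWord h hlt hsub

end Stmt8aux

/-- Every multi-cylinder `C¹_U` is defined by a unique set of reduced words of minimal
cardinality. -/
theorem stmt8 [DecidableEq α] [Fintype α] [Nontrivial α] (U : Finset (FreeGroup α)) :
    ∃! V : Finset (FreeGroup α),
      (⋃ u ∈ V, Cyl u.toWord) = (⋃ u ∈ U, Cyl u.toWord) ∧
      ∀ W : Finset (FreeGroup α),
        (⋃ u ∈ W, Cyl u.toWord) = (⋃ u ∈ U, Cyl u.toWord) → V.card ≤ W.card := by
  classical
  have hex : ∃ n : ℕ, ∃ V : Finset (FreeGroup α),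
      (⋃ u ∈ V, Cyl u.toWord) = (⋃ u ∈ U, Cyl u.toWord) ∧ V.card = n := ⟨U.card, U, rfl, rfl⟩
  obtain ⟨V, hV, hVc⟩ := Nat.find_spec hex
  have hmin : ∀ W : Finset (FreeGroup α),
      (⋃ u ∈ W, Cyl u.toWord) = (⋃ u ∈ U, Cyl u.toWord) → V.card ≤ W.card := by
    intro W hW
    rw [hVc]
    exact Nat.find_min' hex ⟨W, hW, rfl⟩
  refine ⟨V, ⟨hV, hmin⟩, ?_⟩
  rintro W ⟨hW, hWmin⟩
  apply Finset.ext
  intro v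
  rw [Stmt8aux.mem_min_iff _ W hW hWmin v, Stmt8aux.mem_min_iff _ V hV hmin v]
end

section
/- For the elementary Nielsen automorphism φ (a ↦ ab, fixing b and all c_j) and any reduced word w such that w·a⁻¹ is reduced, the image of the cylinder C¹_{w·a⁻¹} under the boundary extension of φ equals the cylinder C¹_{reduce(φ(w)b⁻¹a⁻¹)}, where the subscript word is the reduced form of φ(w)b⁻¹a⁻¹ (in which b⁻¹a⁻¹ is appended without cancellation against φ(w)b⁻¹). -/
open FreeGroup

variable {α : Type*}

namespace Nielsen

/-- Reducedness as a chain condition. -/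
def Red' (u : List (α × Bool)) : Prop := List.IsChain (fun p q => q ≠ linv p) u

theorem reduce_eq_self [DecidableEq α] {u : List (α × Bool)} (h : Red' u) :
    FreeGroup.reduce u = u := by
  induction u with
  | nil => rfl
  | cons x u ih =>
    rw [Red', List.isChain_cons] at h
    rw [FreeGroup.reduce.cons, ih h.2]
    cases u with
    | nil => rfl
    | cons y u' =>
      have hy : y ≠ linv x := h.1 y rfl
      have : ¬(x.1 = y.1 ∧ x.2 = !y.2) := by
        rintro ⟨h1, h2⟩
        exact hy (by simp [linv, Prod.ext_iff, ← h1, h2])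
      simp [this]

theorem red'_reduce [DecidableEq α] (L : List (α × Bool)) : Red' (FreeGroup.reduce L) := by
  by_contra h
  rw [Red', List.isChain_iff_getElem] at h
  push_neg at h
  obtain ⟨i, hi, hbad⟩ := h
  set l := FreeGroup.reduce L with hl
  have hlt : i + 1 < l.length := by omega
  rcases hp : l[i] with ⟨x, c⟩
  have h1 : l.drop i = l[i] :: l.drop (i + 1) := List.drop_eq_getElem_cons (by omega)
  have h2 : l.drop (i + 1) = l[i+1] :: l.drop (i + 2) := List.drop_eq_getElem_cons (by omega)
  have h3 : l[i+1] = (x, !c) := by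
    have hb : l[i+1] = linv l[i] := hbad
    rw [hp] at hb
    exact hb
  have hdecomp : FreeGroup.reduce L = l.take i ++ (x, c) :: (x, !c) :: l.drop (i + 2) := by
    conv_lhs => rw [← hl, ← List.take_append_drop i l, h1, h2, hp, h3]

  exact FreeGroup.reduce.not hdecomp

theorem red'_toWord [DecidableEq α] (g : FreeGroup α) : Red' g.toWord := by
  have := FreeGroup.reduce_toWord g
  rw [← this]
  exact red'_reduce _

theorem toWord_mk_self [DecidableEq α] {u : List (α × Bool)} (h : Red' u) :
    (FreeGroup.mk u).toWord = u := by
  rw [FreeGroup.toWord_mk, reduce_eq_self h]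

theorem mk_linv [DecidableEq α] (p : α × Bool) :
    FreeGroup.mk [linv p] = (FreeGroup.mk [p])⁻¹ := by
  rw [FreeGroup.inv_mk]
  simp [FreeGroup.invRev, linv]

variable [DecidableEq α]

/-- Letterwise substitution for the Nielsen automorphism `a ↦ a bᵗ`. -/
def Eg (a b : α) (t : Bool) (x : α × Bool) : List (α × Bool) :=
  if x = (a, true) then [(a, true), (b, t)]
  else if x = (a, false) then [(b, !t), (a, false)]
  else [x]

/-- Reduced image of a reduced word under the Nielsen automorphism `a ↦ a bᵗ`. -/
def Dg (a b : α) (t : Bool) : List (α × Bool) → List (α × Bool)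
  | [] => []
  | [x] => Eg a b t x
  | x :: y :: tl =>
    if x = (a, true) ∧ y = (b, !t) then (a, true) :: Dg a b t tl
    else if x = (b, t) ∧ y = (a, false) then (a, false) :: Dg a b t tl
    else Eg a b t x ++ Dg a b t (y :: tl)

variable {a b : α} {t : Bool}

theorem dg_nil : Dg a b t [] = [] := rfl

theorem dg_singleton (x : α × Bool) : Dg a b t [x] = Eg a b t x := rfl

theorem dg_cons_cons (x y : α × Bool) (tl : List (α × Bool)) :
    Dg a b t (x :: y :: tl) =
      if x = (a, true) ∧ y = (b, !t) then (a, true) :: Dg a b t tl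
      else if x = (b, t) ∧ y = (a, false) then (a, false) :: Dg a b t tl
      else Eg a b t x ++ Dg a b t (y :: tl) := rfl

theorem eg_ne_nil (x : α × Bool) : Eg a b t x ≠ [] := by
  unfold Eg; split_ifs <;> simp

theorem eg_length_le (x : α × Bool) : (Eg a b t x).length ≤ 2 := by
  unfold Eg; split_ifs <;> simp

theorem eg_length_pos (x : α × Bool) : 1 ≤ (Eg a b t x).length := by
  unfold Eg; split_ifs <;> simp

theorem dg_ne_nil (z : α × Bool) (s : List (α × Bool)) : Dg a b t (z :: s) ≠ [] := by
  cases s with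
  | nil => exact eg_ne_nil z
  | cons y tl =>
    rw [dg_cons_cons]
    split_ifs <;> simp [eg_ne_nil]

theorem dg_length : ∀ u : List (α × Bool), (u.length + 1) / 2 ≤ (Dg a b t u).length
  | [] => by simp [dg_nil]
  | [x] => by rw [dg_singleton]; have := eg_length_pos (a := a) (b := b) (t := t) x; simp; omega
  | x :: y :: tl => by
    rw [dg_cons_cons]
    have h1 := dg_length tl
    have h2 := dg_length (y :: tl)
    have h3 := eg_length_pos (a := a) (b := b) (t := t) x
    split_ifs <;> simp only [List.length_cons, List.length_append] at * <;> omega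

theorem dg_head (hab : a ≠ b) : ∀ (z : α × Bool) (s : List (α × Bool)),
    ((Dg a b t (z :: s)).head? = some z ∧ z ≠ (a, false)) ∨
    ((Dg a b t (z :: s)).head? = some (b, !t) ∧ z = (a, false)) ∨
    ((Dg a b t (z :: s)).head? = some (a, false) ∧ z = (b, t)) := by
  intro z s
  cases s with
  | nil =>
    rw [dg_singleton]; unfold Eg
    split_ifs with h1 h2
    · subst h1; exact Or.inl ⟨rfl, by simp⟩
    · subst h2; exact Or.inr (Or.inl ⟨rfl, rfl⟩)
    · exact Or.inl ⟨rfl, h2⟩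
  | cons y tl =>
    rw [dg_cons_cons]
    split_ifs with h1 h2
    · rw [h1.1]; exact Or.inl ⟨rfl, by simp⟩
    · exact Or.inr (Or.inr ⟨rfl, h2.1⟩)
    · unfold Eg
      split_ifs with e1 e2
      · subst e1; exact Or.inl ⟨rfl, by simp⟩
      · subst e2; exact Or.inr (Or.inl ⟨rfl, rfl⟩)
      · exact Or.inl ⟨rfl, e2⟩

theorem eg_getLast? (x : α × Bool) :
    (Eg a b t x).getLast? = some (if x = (a, true) then (b, t) else x) := by
  unfold Eg; split_ifs <;> simp_all

theorem dg_getLast? (hab : a ≠ b) : ∀ u : List (α × Bool),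
    u.getLast? = some (a, false) → (Dg a b t u).getLast? = some (a, false)
  | [], h => by simp at h
  | [x], h => by
    simp at h
    rw [dg_singleton, h]
    unfold Eg
    rw [if_neg (by simp), if_pos rfl]
    simp
  | x :: y :: tl, h => by
    have h' : (y :: tl).getLast? = some (a, false) := by
      rwa [List.getLast?_cons_cons] at h
    rw [dg_cons_cons]
    split_ifs with h1 h2
    · -- x = (a,true), y = (b,!t)
      cases tl with
      | nil =>
        simp at h'
        rw [h1.2] at h'
        exact absurd (congrArg Prod.fst h') hab.symm
      | cons c tl' =>
        have htl : (c :: tl').getLast? = some (a, false) := by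
          rwa [List.getLast?_cons_cons] at h'
        have := dg_getLast? hab (c :: tl') htl
        rw [show ((a, true) :: Dg a b t (c :: tl')) = [(a, true)] ++ Dg a b t (c :: tl') from rfl,
          List.getLast?_append, this]
        rfl
    · cases tl with
      | nil => simp [dg_nil]
      | cons c tl' =>
        have htl : (c :: tl').getLast? = some (a, false) := by
          rwa [List.getLast?_cons_cons] at h'
        have := dg_getLast? hab (c :: tl') htl
        rw [show ((a, false) :: Dg a b t (c :: tl')) = [(a, false)] ++ Dg a b t (c :: tl') from rfl,
          List.getLast?_append, this]
        rfl
    · have := dg_getLast? hab (y :: tl) h'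
      rw [List.getLast?_append, this]
      rfl

theorem eg_red' (hab : a ≠ b) (x : α × Bool) : Red' (Eg a b t x) := by
  unfold Eg
  split_ifs <;> simp [Red', linv, Prod.ext_iff, hab, hab.symm]

theorem linv_eq_iff {p q : α × Bool} : q = linv p ↔ p = linv q := by
  rcases p with ⟨p1, p2⟩; rcases q with ⟨q1, q2⟩
  simp only [linv, Prod.ext_iff]
  constructor <;> rintro ⟨rfl, rfl⟩ <;> simp

theorem dg_red' (hab : a ≠ b) : ∀ u : List (α × Bool), Red' u → Red' (Dg a b t u)
  | [], _ => by simp [dg_nil, Red']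
  | [x], _ => by rw [dg_singleton]; exact eg_red' hab x
  | x :: y :: tl, h => by
    have hxy : y ≠ linv x := by rw [Red', List.isChain_cons_cons] at h; exact h.1
    have h2 : Red' (y :: tl) := by rw [Red', List.isChain_cons_cons] at h; exact h.2
    have htl : Red' tl := h2.tail
    rw [dg_cons_cons]
    split_ifs with h1 hs2
    · -- seam `(a,true) (b,!t)`
      obtain ⟨hx, hy⟩ := h1
      rw [Red', List.isChain_cons]
      refine ⟨?_, dg_red' hab tl htl⟩
      intro z hz
      cases tl with
      | nil => simp [dg_nil] at hz
      | cons c tl' =>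
        have hyc : c ≠ linv y := by rw [Red', List.isChain_cons_cons] at h2; exact h2.1
        rcases dg_head hab c tl' with ⟨hh, hne⟩ | ⟨hh, hc⟩ | ⟨hh, hc⟩ <;>
          rw [hh] at hz <;> simp only [Option.mem_some_iff] at hz <;> subst hz
        · simpa [linv] using hne
        · simp [linv, Prod.ext_iff, hab.symm]
        · exact absurd hc (by rw [hy] at hyc; simpa [linv] using hyc)
    · -- seam `(b,t) (a,false)`
      obtain ⟨hx, hy⟩ := hs2
      rw [Red', List.isChain_cons]
      refine ⟨?_, dg_red' hab tl htl⟩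
      intro z hz
      cases tl with
      | nil => simp [dg_nil] at hz
      | cons c tl' =>
        have hyc : c ≠ linv y := by rw [Red', List.isChain_cons_cons] at h2; exact h2.1
        rcases dg_head hab c tl' with ⟨hh, hne⟩ | ⟨hh, hc⟩ | ⟨hh, hc⟩ <;>
          rw [hh] at hz <;> simp only [Option.mem_some_iff] at hz <;> subst hz
        · rw [hy] at hyc; exact hyc
        · simp [linv, Prod.ext_iff, hab.symm]
        · simp [linv]
    · -- no seam
      refine List.IsChain.append (eg_red' hab x) (dg_red' hab (y :: tl) h2) ?_
      intro p hp q hq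
      rw [eg_getLast?] at hp
      simp only [Option.mem_some_iff] at hp
      subst hp
      rcases dg_head hab y tl with ⟨hh, hne⟩ | ⟨hh, hy⟩ | ⟨hh, hy⟩ <;>
        rw [hh] at hq <;> simp only [Option.mem_some_iff] at hq <;> subst hq
      · -- q = y
        split_ifs with hx
        · -- x = (a,true) : y ≠ linv (b,t) = (b,!t)
          intro hcon
          exact h1 ⟨hx, by simpa [linv] using hcon⟩
        · exact hxy
      · -- q = (b,!t), y = (a,false)
        split_ifs with hx
        · exact absurd hy (by rw [hx] at hxy; simpa [linv] using hxy)
        · intro hcon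
          rw [linv_eq_iff] at hcon
          exact hs2 ⟨by simpa [linv] using hcon, hy⟩
      · -- q = (a,false), y = (b,t)
        split_ifs with hx
        · simp [linv, Prod.ext_iff, hab]
        · intro hcon
          rw [linv_eq_iff] at hcon
          exact hx (by simpa [linv] using hcon)

theorem mk_pair_cancel : FreeGroup.mk ([(b, t), (b, !t)] : List (α × Bool)) = 1 := by
  have h : ((b, !t) : α × Bool) = linv (b, t) := by simp [linv]
  rw [show ([(b, t), (b, !t)] : List (α × Bool)) = [(b, t)] ++ [(b, !t)] from rfl,
    ← FreeGroup.mul_mk, h, mk_linv, mul_inv_cancel]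

theorem mk_eg (hab : a ≠ b) (f : FreeGroup α →* FreeGroup α)
    (hfa : f (FreeGroup.of a) = FreeGroup.mk [(a, true), (b, t)])
    (hfo : ∀ x : α, x ≠ a → f (FreeGroup.of x) = FreeGroup.of x) (x : α × Bool) :
    FreeGroup.mk (Eg a b t x) = f (FreeGroup.mk [x]) := by
  rcases x with ⟨c, s⟩
  have hof : ∀ d : α, FreeGroup.mk [(d, true)] = FreeGroup.of d := fun _ => rfl
  cases s
  · have hc : FreeGroup.mk [(c, false)] = (FreeGroup.of c)⁻¹ := by
      rw [show ((c, false) : α × Bool) = linv (c, true) from rfl, mk_linv, hof]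
    rw [hc, _root_.map_inv]
    by_cases h : c = a
    · subst h
      rw [hfa, FreeGroup.inv_mk]
      unfold Eg FreeGroup.invRev
      rw [if_neg (by simp), if_pos rfl]
      simp
    · rw [hfo c h]
      unfold Eg
      rw [if_neg (by simp [h]), if_neg (by simp [h]), hc]
  · rw [hof]
    by_cases h : c = a
    · subst h; rw [hfa]; unfold Eg; rw [if_pos rfl]
    · rw [hfo c h]; unfold Eg
      rw [if_neg (by simp [h]), if_neg (by simp [h]), hof]

theorem mk_dg (hab : a ≠ b) (f : FreeGroup α →* FreeGroup α)
    (hfa : f (FreeGroup.of a) = FreeGroup.mk [(a, true), (b, t)])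
    (hfo : ∀ x : α, x ≠ a → f (FreeGroup.of x) = FreeGroup.of x) :
    ∀ u : List (α × Bool), FreeGroup.mk (Dg a b t u) = f (FreeGroup.mk u)
  | [] => by rw [dg_nil, ← FreeGroup.one_eq_mk]; exact (_root_.map_one f).symm
  | [x] => by rw [dg_singleton]; exact mk_eg hab f hfa hfo x
  | x :: y :: tl => by
    have hsplit : f (FreeGroup.mk (x :: y :: tl)) =
        FreeGroup.mk (Eg a b t x) * (FreeGroup.mk (Eg a b t y) * FreeGroup.mk (Dg a b t tl)) := by
      rw [show (x :: y :: tl) = [x] ++ ([y] ++ tl) from rfl, ← FreeGroup.mul_mk,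
        ← FreeGroup.mul_mk, _root_.map_mul, _root_.map_mul, mk_eg hab f hfa hfo x, mk_eg hab f hfa hfo y,
        mk_dg hab f hfa hfo tl]
    rw [dg_cons_cons]
    split_ifs with h1 hs2
    · obtain ⟨hx, hy⟩ := h1
      subst hx; subst hy
      have he1 : Eg a b t ((a, true) : α × Bool) = [(a, true), (b, t)] := by
        unfold Eg; rw [if_pos rfl]
      have he2 : Eg a b t ((b, !t) : α × Bool) = [(b, !t)] := by
        unfold Eg; rw [if_neg (by simp [hab.symm]), if_neg (by simp [hab.symm])]
      have hkey : FreeGroup.mk ([(a, true), (b, t)] : List (α × Bool)) *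
          FreeGroup.mk ([(b, !t)] : List (α × Bool)) = FreeGroup.mk [(a, true)] := by
        rw [FreeGroup.mul_mk,
          show ([(a, true), (b, t)] ++ [(b, !t)] : List (α × Bool)) =
            [(a, true)] ++ [(b, t), (b, !t)] from rfl,
          ← FreeGroup.mul_mk, mk_pair_cancel, mul_one]
      rw [hsplit, he1, he2, ← mul_assoc, hkey, FreeGroup.mul_mk]
      rfl
    · obtain ⟨hx, hy⟩ := hs2
      subst hx; subst hy
      have he1 : Eg a b t ((b, t) : α × Bool) = [(b, t)] := by
        unfold Eg; rw [if_neg (by simp [hab.symm]), if_neg (by simp [hab.symm])]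
      have he2 : Eg a b t ((a, false) : α × Bool) = [(b, !t), (a, false)] := by
        unfold Eg; rw [if_neg (by simp), if_pos rfl]
      have hkey : FreeGroup.mk ([(b, t)] : List (α × Bool)) *
          FreeGroup.mk ([(b, !t), (a, false)] : List (α × Bool)) =
          FreeGroup.mk [(a, false)] := by
        rw [FreeGroup.mul_mk,
          show ([(b, t)] ++ [(b, !t), (a, false)] : List (α × Bool)) =
            [(b, t), (b, !t)] ++ [(a, false)] from rfl,
          ← FreeGroup.mul_mk, mk_pair_cancel, one_mul]
      rw [hsplit, he1, he2, ← mul_assoc, hkey, FreeGroup.mul_mk]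
      rfl
    · rw [← FreeGroup.mul_mk, mk_eg hab f hfa hfo x, mk_dg hab f hfa hfo (y :: tl), ← _root_.map_mul,
        FreeGroup.mul_mk]
      rfl

theorem dg_append (hab : a ≠ b) : ∀ u v : List (α × Bool),
    u.getLast? = some (a, false) → Dg a b t (u ++ v) = Dg a b t u ++ Dg a b t v
  | [], v, h => by simp at h
  | [x], v, h => by
    simp at h
    subst h
    cases v with
    | nil => simp [dg_nil]
    | cons z v' =>
      rw [List.singleton_append, dg_cons_cons, dg_singleton,
        if_neg (by simp), if_neg (by simp [hab])]
  | x :: y :: tl, v, h => by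
    have h' : (y :: tl).getLast? = some (a, false) := by
      rwa [List.getLast?_cons_cons] at h
    rw [show (x :: y :: tl) ++ v = x :: y :: (tl ++ v) from rfl, dg_cons_cons, dg_cons_cons]
    split_ifs with h1 hs2
    · cases tl with
      | nil =>
        simp at h'
        rw [h1.2] at h'
        exact absurd (congrArg Prod.fst h') hab.symm
      | cons c tl' =>
        have htl : (c :: tl').getLast? = some (a, false) := by
          rwa [List.getLast?_cons_cons] at h'
        have hrec := dg_append hab (c :: tl') v htl
        simp only [List.cons_append] at hrec ⊢
        rw [hrec]
    · cases tl with
      | nil =>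
        show (a, false) :: Dg a b t v = ((a, false) :: Dg a b t []) ++ Dg a b t v
        rw [dg_nil]
        rfl
      | cons c tl' =>
        have htl : (c :: tl').getLast? = some (a, false) := by
          rwa [List.getLast?_cons_cons] at h'
        have hrec := dg_append hab (c :: tl') v htl
        simp only [List.cons_append] at hrec ⊢
        rw [hrec]
    · have hrec := dg_append hab (y :: tl) v h'
      simp only [List.cons_append] at hrec ⊢
      rw [hrec, List.append_assoc]

theorem dg_take : ∀ u v : List (α × Bool),
    (Dg a b t (u ++ v)).take ((Dg a b t u).length - 2) =
      (Dg a b t u).take ((Dg a b t u).length - 2)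
  | [], v => by simp [dg_nil]
  | [x], v => by
    have h := eg_length_le (a := a) (b := b) (t := t) x
    rw [dg_singleton, show (Eg a b t x).length - 2 = 0 by omega]
    simp
  | x :: y :: tl, v => by
    simp only [List.cons_append, dg_cons_cons]
    split_ifs with h1 hs2
    · have ih := dg_take tl v
      by_cases hl : (Dg a b t tl).length ≤ 1
      · rw [show ((a, true) :: Dg a b t tl).length - 2 = 0 by simp; omega]
        simp
      · have hlen : ((a, true) :: Dg a b t tl).length - 2 = ((Dg a b t tl).length - 2) + 1 := by
          simp; omega
        rw [hlen, List.take_succ_cons, List.take_succ_cons, ih]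
    · have ih := dg_take tl v
      by_cases hl : (Dg a b t tl).length ≤ 1
      · rw [show ((a, false) :: Dg a b t tl).length - 2 = 0 by simp; omega]
        simp
      · have hlen : ((a, false) :: Dg a b t tl).length - 2 = ((Dg a b t tl).length - 2) + 1 := by
          simp; omega
        rw [hlen, List.take_succ_cons, List.take_succ_cons, ih]
    · have ih := dg_take (y :: tl) v
      simp only [List.cons_append] at ih ⊢
      by_cases hk : 2 ≤ (Dg a b t (y :: tl)).length
      · have he : (Eg a b t x ++ Dg a b t (y :: tl)).length - 2 =
            (Eg a b t x).length + ((Dg a b t (y :: tl)).length - 2) := by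
          rw [List.length_append]; omega
        rw [he, List.take_append, List.take_append, Nat.add_sub_cancel_left, ih]
      · have he : (Eg a b t x ++ Dg a b t (y :: tl)).length - 2 ≤ (Eg a b t x).length := by
          rw [List.length_append]; omega
        rw [List.take_append_of_le_length he, List.take_append_of_le_length he]

theorem dg_getElem?_stable (u v : List (α × Bool)) {n : ℕ}
    (hn : n + 2 < (Dg a b t u).length) :
    (Dg a b t (u ++ v))[n]? = (Dg a b t u)[n]? := by
  have h := dg_take (a := a) (b := b) (t := t) u v
  calc (Dg a b t (u ++ v))[n]?
      = ((Dg a b t (u ++ v)).take ((Dg a b t u).length - 2))[n]? :=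
        (List.getElem?_take_of_lt (by omega)).symm
    _ = ((Dg a b t u).take ((Dg a b t u).length - 2))[n]? := by rw [h]
    _ = (Dg a b t u)[n]? := List.getElem?_take_of_lt (by omega)

theorem pre_length (ζ : Bd α) (m : ℕ) : (pre ζ m).length = m := by simp [pre]

theorem pre_getElem (ζ : Bd α) {m i : ℕ} (h : i < m) :
    (pre ζ m)[i]'(by simpa [pre_length]) = ζ.1 i := by
  simp [pre]

theorem pre_getElem? (ζ : Bd α) {m i : ℕ} (h : i < m) : (pre ζ m)[i]? = some (ζ.1 i) := by
  rw [List.getElem?_eq_getElem (by simpa [pre_length]), pre_getElem ζ h]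

theorem pre_red' (ζ : Bd α) (m : ℕ) : Red' (pre ζ m) := by
  rw [Red', pre, List.isChain_ofFn]
  intro i hi
  simpa using ζ.2 i

theorem pre_succ (ζ : Bd α) (m : ℕ) : pre ζ (m + 1) = pre ζ m ++ [ζ.1 m] := by
  rw [pre, List.ofFn_succ']
  simp [pre, List.concat_eq_append]

theorem pre_take (ζ : Bd α) {k M : ℕ} (h : k ≤ M) : (pre ζ M).take k = pre ζ k := by
  apply List.ext_getElem
  · simp [pre_length]; omega
  · intro n h1 h2
    rw [List.getElem_take, pre_getElem ζ (by simp [pre_length] at h2; omega),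
      pre_getElem ζ (by simp [pre_length] at h1; omega)]

theorem pre_split {ζ : Bd α} {u : List (α × Bool)} (hζ : ζ ∈ Cyl u) {m : ℕ}
    (hm : u.length ≤ m) :
    pre ζ m = u ++ List.ofFn (fun i : Fin (m - u.length) => ζ.1 (u.length + i)) := by
  apply List.ext_getElem
  · simp [pre_length]; omega
  · intro n h1 h2
    rw [pre_getElem ζ (by simpa [pre_length] using h1), List.getElem_append]
    split_ifs with h3
    · exact (hζ n h3).trans (by simp)
    · push_neg at h3
      have h2' : n < u.length + (m - u.length) := by simpa using h2
      rw [List.getElem_ofFn]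
      show ζ.1 n = ζ.1 (u.length + (n - u.length))
      rw [Nat.add_sub_cancel' h3]

theorem dg_pre_stable (ζ : Bd α) (n : ℕ) : ∀ m, 2 * n + 6 ≤ m →
    (Dg a b t (pre ζ m))[n]? = (Dg a b t (pre ζ (2 * n + 6)))[n]? := by
  intro m hm
  induction m with
  | zero => omega
  | succ m ih =>
    rcases Nat.lt_or_ge m (2 * n + 6) with h | h
    · rw [show m + 1 = 2 * n + 6 by omega]
    · have hlen : n + 2 < (Dg a b t (pre ζ m)).length := by
        have := dg_length (a := a) (b := b) (t := t) (pre ζ m)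
        rw [pre_length] at this
        omega
      rw [pre_succ, dg_getElem?_stable _ _ hlen, ih h]

theorem dg_pre_lt (ζ : Bd α) (n m : ℕ) (hm : 2 * n + 6 ≤ m) :
    n < (Dg a b t (pre ζ m)).length := by
  have := dg_length (a := a) (b := b) (t := t) (pre ζ m)
  rw [pre_length] at this
  omega

end Nielsen

open Nielsen

/-- Nielsen automorphism `a ↦ ab`: `φ(C¹_{w·a⁻¹}) = C¹_{φ(w)b⁻¹·a⁻¹}`. -/
theorem stmt9 [DecidableEq α] [Nontrivial α] (a b : α) (hab : a ≠ b)
    (φ : FreeGroup α ≃* FreeGroup α)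
    (hφa : φ (FreeGroup.of a) = FreeGroup.of a * FreeGroup.of b)
    (hφ : ∀ x : α, x ≠ a → φ (FreeGroup.of x) = FreeGroup.of x)
    (Φ : Bd α → Bd α) (hΦ : ExtendsBd φ Φ)
    (w : FreeGroup α)
    (hred : (w * (FreeGroup.of a)⁻¹).toWord = w.toWord ++ [(a, false)]) :
    Φ '' Cyl ((w * (FreeGroup.of a)⁻¹).toWord) =
      Cyl ((φ w * (FreeGroup.of b)⁻¹ * (FreeGroup.of a)⁻¹).toWord) := by
  classical
  set S := (w * (FreeGroup.of a)⁻¹).toWord with hSdef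
  set T := (φ w * (FreeGroup.of b)⁻¹ * (FreeGroup.of a)⁻¹).toWord with hTdef
  have hSred : Red' S := red'_toWord _
  have hTred : Red' T := red'_toWord _
  have hSlast : S.getLast? = some (a, false) := by rw [hred]; exact List.getLast?_concat
  have hfa1 : φ.toMonoidHom (FreeGroup.of a) = FreeGroup.mk [(a, true), (b, true)] := by
    show φ (FreeGroup.of a) = _
    rw [hφa, show (FreeGroup.of a : FreeGroup α) = FreeGroup.mk [(a, true)] from rfl,
      show (FreeGroup.of b : FreeGroup α) = FreeGroup.mk [(b, true)] from rfl, FreeGroup.mul_mk]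
    rfl
  have hfo1 : ∀ x : α, x ≠ a → φ.toMonoidHom (FreeGroup.of x) = FreeGroup.of x := fun x hx =>
    hφ x hx
  have hsymm_b : ∀ x : α, x ≠ a → φ.symm (FreeGroup.of x) = FreeGroup.of x := by
    intro x hx
    apply φ.injective
    rw [MulEquiv.apply_symm_apply, hφ x hx]
  have hsymm_a : φ.symm (FreeGroup.of a) = FreeGroup.of a * (FreeGroup.of b)⁻¹ := by
    apply φ.injective
    rw [MulEquiv.apply_symm_apply, _root_.map_mul, _root_.map_inv, hφa, hφ b (Ne.symm hab)]
    group
  have hmkbinv : FreeGroup.mk [(b, false)] = (FreeGroup.of b)⁻¹ := by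
    rw [show ((b, false) : α × Bool) = linv (b, true) from rfl, mk_linv]
    rfl
  have hfa0 : φ.symm.toMonoidHom (FreeGroup.of a) = FreeGroup.mk [(a, true), (b, false)] := by
    show φ.symm (FreeGroup.of a) = _
    rw [hsymm_a, show (FreeGroup.mk [(a, true), (b, false)] : FreeGroup α) =
      FreeGroup.mk ([(a, true)] ++ [(b, false)]) from rfl, ← FreeGroup.mul_mk, hmkbinv]
    rfl
  have hfo0 : ∀ x : α, x ≠ a → φ.symm.toMonoidHom (FreeGroup.of x) = FreeGroup.of x := fun x hx =>
    hsymm_b x hx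
  have hDS : Dg a b true S = T := by
    have h1 : FreeGroup.mk (Dg a b true S) =
        φ w * (FreeGroup.of b)⁻¹ * (FreeGroup.of a)⁻¹ := by
      rw [mk_dg hab φ.toMonoidHom hfa1 hfo1 S]
      show φ (FreeGroup.mk S) = _
      rw [hSdef, FreeGroup.mk_toWord, _root_.map_mul, _root_.map_inv, hφa]
      group
    rw [← toWord_mk_self (dg_red' hab S hSred), h1]
  have hTlast : T.getLast? = some (a, false) := by
    rw [← hDS]
    exact dg_getLast? hab S hSlast
  have hDT : Dg a b false T = S := by
    have h1 : FreeGroup.mk (Dg a b false T) = w * (FreeGroup.of a)⁻¹ := by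
      rw [mk_dg hab φ.symm.toMonoidHom hfa0 hfo0 T]
      show φ.symm (FreeGroup.mk T) = _
      rw [hTdef, FreeGroup.mk_toWord, _root_.map_mul, _root_.map_mul, _root_.map_inv, _root_.map_inv,
        hsymm_a, hsymm_b b (Ne.symm hab), MulEquiv.symm_apply_apply]
      group
    rw [← toWord_mk_self (dg_red' hab T hTred), h1]
  apply Set.Subset.antisymm
  · -- forward inclusion
    rintro η ⟨ξ, hξ, rfl⟩
    have hpreword : ∀ m : ℕ, (φ (FreeGroup.mk (pre ξ m))).toWord = Dg a b true (pre ξ m) := by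
      intro m
      have h := mk_dg hab φ.toMonoidHom hfa1 hfo1 (pre ξ m)
      rw [show φ.toMonoidHom (FreeGroup.mk (pre ξ m)) = φ (FreeGroup.mk (pre ξ m)) from rfl] at h
      rw [← h, toWord_mk_self (dg_red' hab _ (pre_red' ξ m))]
    have key : List.ofFn (fun i : Fin T.length => (Φ ξ).1 i) = T := by
      obtain ⟨n₀, hn₀⟩ := hΦ ξ T.length
      have h1 := hn₀ (max n₀ S.length) (le_max_left _ _)
      have hpre := pre_split hξ (le_max_right n₀ S.length)
      rw [hpreword, hpre, dg_append hab _ _ hSlast, hDS, List.take_left' rfl] at h1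
      exact h1.symm
    intro i hi
    have e : T[i]? = some ((Φ ξ).1 i) := by
      conv_lhs => rw [← key]
      rw [List.getElem?_eq_getElem (by simpa using hi), List.getElem_ofFn]
    rw [List.getElem?_eq_getElem hi, Option.some_inj] at e
    rw [List.get_eq_getElem]
    exact e.symm
  · -- backward inclusion
    intro η hη
    have hstab : ∀ n m, 2 * n + 6 ≤ m → (Dg a b false (pre η m))[n]? =
        some ((Dg a b false (pre η (2 * n + 6))).getD n (a, true)) := by
      intro n m hm
      rw [dg_pre_stable η n m hm,
        List.getElem?_eq_getElem (dg_pre_lt η n _ le_rfl),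
        List.getD_eq_getElem _ _ (dg_pre_lt η n _ le_rfl)]
    set ξf : ℕ → α × Bool := fun n => (Dg a b false (pre η (2 * n + 6))).getD n (a, true)
      with hξf
    have hchain : ∀ n, ξf (n + 1) ≠ linv (ξf n) := by
      intro n
      have e1 := hstab n (2 * (n + 1) + 6) (by omega)
      have e2 := hstab (n + 1) (2 * (n + 1) + 6) le_rfl
      have hredl := dg_red' (t := false) hab _ (pre_red' η (2 * (n + 1) + 6))
      rw [Red', List.isChain_iff_getElem] at hredl
      have hlt : n + 1 < (Dg a b false (pre η (2 * (n + 1) + 6))).length :=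
        dg_pre_lt η (n + 1) _ le_rfl
      have hr := hredl n (by omega)
      rw [List.getElem?_eq_getElem (by omega : n < (Dg a b false (pre η (2 * (n + 1) + 6))).length)] at e1
      rw [List.getElem?_eq_getElem hlt] at e2
      simp only [Option.some_inj] at e1 e2
      rw [e1, e2] at hr
      exact hr
    refine ⟨⟨ξf, hchain⟩, ?_, ?_⟩
    · -- ξ ∈ Cyl S
      intro i hi
      have h1 := hstab i (max (2 * i + 6) T.length) (le_max_left _ _)
      have hpre := pre_split hη (le_max_right (2 * i + 6) T.length)
      rw [hpre, dg_append hab _ _ hTlast, hDT,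
        List.getElem?_append_left hi, List.getElem?_eq_getElem hi] at h1
      show ξf i = S.get ⟨i, hi⟩
      rw [List.get_eq_getElem]
      exact (Option.some_inj.mp h1).symm
    · -- Φ ξ = η
      set ξ : Bd α := ⟨ξf, hchain⟩ with hξdef
      have hpreword : ∀ m : ℕ, (φ (FreeGroup.mk (pre ξ m))).toWord = Dg a b true (pre ξ m) := by
        intro m
        have h := mk_dg hab φ.toMonoidHom hfa1 hfo1 (pre ξ m)
        rw [show φ.toMonoidHom (FreeGroup.mk (pre ξ m)) = φ (FreeGroup.mk (pre ξ m)) from rfl] at h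
        rw [← h, toWord_mk_self (dg_red' hab _ (pre_red' ξ m))]
      have main : ∀ k : ℕ, List.ofFn (fun i : Fin k => (Φ ξ).1 i) = pre η k := by
        intro k
        obtain ⟨n₀, hn₀⟩ := hΦ ξ k
        set m := max n₀ (2 * k + 6) with hmdef
        have h1 := hn₀ m (le_max_left _ _)
        have hm2 : 2 * k + 6 ≤ m := le_max_right _ _
        have hρlen := dg_length (a := a) (b := b) (t := false) (pre η (2 * m + 6))
        rw [pre_length] at hρlen
        have hA : pre ξ m = (Dg a b false (pre η (2 * m + 6))).take m := by
          apply List.ext_getElem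
          · rw [pre_length, List.length_take]
            omega
          · intro i hil hir
            rw [pre_length] at hil
            rw [pre_getElem ξ hil, List.getElem_take]
            have hs := hstab i (2 * m + 6) (by omega)
            rw [List.getElem?_eq_getElem (by
              have := dg_pre_lt (a := a) (b := b) (t := false) η i (2 * m + 6) (by omega)
              exact this)] at hs
            exact (Option.some_inj.mp hs).symm
        have hBmk : FreeGroup.mk (Dg a b true (Dg a b false (pre η (2 * m + 6)))) =
            FreeGroup.mk (pre η (2 * m + 6)) := by
          rw [mk_dg hab φ.toMonoidHom hfa1 hfo1, mk_dg hab φ.symm.toMonoidHom hfa0 hfo0]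
          show φ (φ.symm (FreeGroup.mk (pre η (2 * m + 6)))) = _
          rw [MulEquiv.apply_symm_apply]
        have hB : Dg a b true (Dg a b false (pre η (2 * m + 6))) = pre η (2 * m + 6) := by
          have r1 : Red' (Dg a b false (pre η (2 * m + 6))) := dg_red' hab _ (pre_red' η _)
          have r2 := dg_red' hab _ r1 (t := true)
          rw [← toWord_mk_self r2, hBmk, toWord_mk_self (pre_red' η _)]
        have hk3 : k + 2 < (Dg a b true (pre ξ m)).length := by
          have := dg_length (a := a) (b := b) (t := true) (pre ξ m)
          rw [pre_length] at this
          omega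
        have h4 : (Dg a b true (pre ξ m)).take k = pre η k := by
          have hsplit : pre ξ m ++ (Dg a b false (pre η (2 * m + 6))).drop m =
              Dg a b false (pre η (2 * m + 6)) := by
            rw [hA, List.take_append_drop]
          have ht := dg_take (a := a) (b := b) (t := true) (pre ξ m)
            ((Dg a b false (pre η (2 * m + 6))).drop m)
          rw [hsplit, hB] at ht
          have ht2 := congrArg (List.take k) ht
          have hmin : k ⊓ ((Dg a b true (pre ξ m)).length - 2) = k := by omega
          rw [List.take_take, List.take_take, hmin] at ht2
          rw [← ht2, pre_take η (by omega)]
        rw [hpreword, h4] at h1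
        exact h1.symm
      apply Subtype.ext
      funext n
      have e' : (List.ofFn (fun i : Fin (n + 1) => (Φ ξ).1 i))[n]? = (pre η (n + 1))[n]? := by
        rw [main (n + 1)]
      rw [pre_getElem? η (by omega),
        List.getElem?_eq_getElem (by simp)] at e'
      simp only [List.getElem_ofFn, Option.some_inj] at e'
      exact e'
end

section
/- Let φ be an automorphism of F(A) and let S(φ) be the maximum word length of φ(x) and φ⁻¹(x) over all x ∈ A. Then for any reduced word u ∈ F(A), the image φ(C¹_u) of the cylinder C¹_u equals the multi-cylinder C¹_U, where U = { φ(u')|_{S(φ)²} : u' ∈ u|^k } with k = S(φ)⁴ + S(φ)³ + S(φ)², w|_l denotes w with its last l letters erased, and w|^l denotes the set of all reduced words obtained from w by appending l letters. -/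
open FreeGroup

variable {α : Type*}

lemma linv_linv (x : α × Bool) : linv (linv x) = x := by simp [linv]

/-- `Rd L`: the word `L` is reduced. -/
def Rd (L : List (α × Bool)) : Prop := List.IsChain (fun a b => b ≠ linv a) L

lemma cond_iff (x hd : α × Bool) : (x.1 = hd.1 ∧ x.2 = !hd.2) ↔ hd = linv x := by
  cases x with | mk a b => cases hd with | mk a' b' =>
  cases b <;> cases b' <;> simp [linv, eq_comm]

lemma rd_reduce [DecidableEq α] (L : List (α × Bool)) : Rd (reduce L) := by
  induction L with
  | nil => simp [Rd]
  | cons x L ih =>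
    rw [FreeGroup.reduce.cons]
    rcases h : FreeGroup.reduce L with _ | ⟨hd, tl⟩
    · simp [Rd]
    · rw [h] at ih
      by_cases hc : x.1 = hd.1 ∧ x.2 = !hd.2
      · simpa [hc, Rd] using ih.tail
      · simp only [if_neg hc]
        exact List.isChain_cons_cons.mpr ⟨fun h' => hc ((cond_iff x hd).mpr h'), ih⟩

lemma Rd.reduce_eq [DecidableEq α] {L : List (α × Bool)} (h : Rd L) : reduce L = L := by
  induction L with
  | nil => simp
  | cons x L ih =>
    rw [FreeGroup.reduce.cons, ih h.tail]
    cases L with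
    | nil => rfl
    | cons hd tl =>
      have h1 : hd ≠ linv x := (List.isChain_cons_cons.mp h).1
      simp only [if_neg (fun h' => h1 ((cond_iff x hd).mp h'))]

lemma rd_iff [DecidableEq α] {L : List (α × Bool)} : Rd L ↔ reduce L = L :=
  ⟨Rd.reduce_eq, fun h => h ▸ rd_reduce L⟩

lemma rd_toWord [DecidableEq α] (g : FreeGroup α) : Rd g.toWord := by
  have := rd_reduce g.toWord
  rwa [FreeGroup.reduce_toWord] at this

lemma toWord_mk_rd [DecidableEq α] {L : List (α × Bool)} (h : Rd L) : (mk L).toWord = L := by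
  rw [FreeGroup.toWord_mk, h.reduce_eq]

lemma Rd.append_left {a b : List (α × Bool)} (h : Rd (a ++ b)) : Rd a :=
  (List.isChain_append.mp h).1

lemma Rd.append_right {a b : List (α × Bool)} (h : Rd (a ++ b)) : Rd b :=
  (List.isChain_append.mp h).2.1

lemma Rd.take {L : List (α × Bool)} (h : Rd L) (n : ℕ) : Rd (L.take n) := by
  have : Rd (L.take n ++ L.drop n) := by rw [List.take_append_drop]; exact h
  exact this.append_left

lemma Rd.drop {L : List (α × Bool)} (h : Rd L) (n : ℕ) : Rd (L.drop n) := by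
  have : Rd (L.take n ++ L.drop n) := by rw [List.take_append_drop]; exact h
  exact this.append_right

/-- The fundamental cancellation decomposition of `reduce (a ++ b)` for reduced `a, b`. -/
lemma cancel_spec [DecidableEq α] (a : List (α × Bool)) :
    ∀ (b : List (α × Bool)), Rd a → Rd b →
    ∃ c, ∃ _ : c ≤ a.length, ∃ _ : c ≤ b.length,
      reduce (a ++ b) = a.take (a.length - c) ++ b.drop c ∧
      (∀ i (hi : i < c), b[i]'(by omega) = linv (a[a.length - 1 - i]'(by omega))) ∧
      (∀ (h1 : c < a.length) (h2 : c < b.length),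
        b[c]'h2 ≠ linv (a[a.length - 1 - c]'(by omega))) := by
  induction a using List.reverseRecOn with
  | nil =>
    intro b _ hb
    exact ⟨0, le_refl _, Nat.zero_le _, by simpa using hb.reduce_eq,
      fun i hi => absurd hi (Nat.not_lt_zero i), fun h1 _ => absurd h1 (by simp)⟩
  | append_singleton a' x ih =>
    intro b ha hb
    cases b with
    | nil =>
      refine ⟨0, Nat.zero_le _, le_refl _, ?_, fun i hi => absurd hi (Nat.not_lt_zero i),
        fun _ h2 => absurd h2 (by simp)⟩
      simp only [List.append_nil, Nat.sub_zero, List.take_length, List.drop_nil]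
      rw [ha.reduce_eq]
    | cons y b' =>
      by_cases hxy : y = linv x
      · have ha' : Rd a' := ha.append_left
        have hb' : Rd b' := hb.tail
        obtain ⟨c, hca, hcb, heq, hpairs, hjunc⟩ := ih b' ha' hb'
        have hstep : Red.Step ((a' ++ [x]) ++ y :: b') (a' ++ b') := by
          have he : (a' ++ [x]) ++ y :: b' = a' ++ (x.1, x.2) :: (x.1, !x.2) :: b' := by
            subst hxy; simp [linv]
          rw [he]
          exact Red.Step.not
        have hlen : (a' ++ [x]).length = a'.length + 1 := by simp
        refine ⟨c + 1, by omega, by simp only [List.length_cons]; omega, ?_, ?_, ?_⟩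
        · rw [FreeGroup.reduce.Step.eq hstep, heq]
          have h1 : (a' ++ [x]).length - (c + 1) = a'.length - c := by omega
          rw [h1, List.take_append_of_le_length (by omega)]
          rfl
        · intro i hi
          rcases Nat.eq_zero_or_pos i with hz | hpos
          · subst hz
            simpa using hxy
          · obtain ⟨i', rfl⟩ := Nat.exists_eq_succ_of_ne_zero (Nat.pos_iff_ne_zero.mp hpos)
            have hi' : i' < c := by omega
            have e1 : (y :: b')[i' + 1]'(by simp; omega) = b'[i']'(by omega) := by
              simp
            rw [e1]
            have e2 : (a' ++ [x])[(a' ++ [x]).length - 1 - (i' + 1)]'(by omega)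
                = a'[a'.length - 1 - i']'(by omega) := by
              rw [List.getElem_append_left (by omega)]
              congr 1
              omega
            rw [e2]
            exact hpairs i' hi'
        · intro h1 h2
          have hc1 : c < a'.length := by simpa [hlen] using h1
          have hc2 : c < b'.length := by simpa using h2
          have e1 : (y :: b')[c + 1]'h2 = b'[c]'hc2 := by simp
          have e2 : (a' ++ [x])[(a' ++ [x]).length - 1 - (c + 1)]'(by omega)
              = a'[a'.length - 1 - c]'(by omega) := by
            rw [List.getElem_append_left (by omega)]
            congr 1
            omega
          rw [e1, e2]
          exact hjunc hc1 hc2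
      · refine ⟨0, Nat.zero_le _, Nat.zero_le _, ?_, fun i hi => absurd hi (Nat.not_lt_zero i),
          ?_⟩
        · have : Rd ((a' ++ [x]) ++ y :: b') := by
            rw [Rd, List.isChain_append]
            refine ⟨ha, hb, ?_⟩
            intro p hp q hq
            simp at hp hq
            subst hp
            subst hq
            exact hxy
          rw [this.reduce_eq, Nat.sub_zero, List.take_length, List.drop_zero]
        · intro h1 h2
          have : (y :: b')[0]'h2 = y := rfl
          rw [this]
          have : (a' ++ [x])[(a' ++ [x]).length - 1 - 0]'(by simp) = x := by simp
          rw [this]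
          exact hxy

lemma Rd.get' {L : List (α × Bool)} (h : Rd L) (i : ℕ) (hi : i + 1 < L.length) :
    L[i + 1] ≠ linv (L[i]'(by omega)) := by
  have := List.isChain_iff_getElem.mp h i (by omega)
  simpa [List.get_eq_getElem] using this

lemma getElem_idx_congr {β : Type*} {l : List β} {i j : ℕ} (h : i = j) (hi : i < l.length) :
    l[i]'hi = l[j]'(h ▸ hi) := by subst h; rfl

lemma length_invRev (w : List (α × Bool)) : (FreeGroup.invRev w).length = w.length := by
  simp [FreeGroup.invRev]

lemma getElem_invRev (w : List (α × Bool)) (j : ℕ) (hj : j < w.length) :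
    (FreeGroup.invRev w)[j]'(by rw [length_invRev]; exact hj)
      = linv (w[w.length - 1 - j]'(by omega)) := by
  unfold FreeGroup.invRev
  rw [List.getElem_reverse, List.getElem_map]
  simp [linv]

lemma length_toWord_inv [DecidableEq α] (x : FreeGroup α) :
    (x⁻¹).toWord.length = x.toWord.length := by
  rw [FreeGroup.toWord_inv, length_invRev]

/-- The inverse word evaluated near its end. -/
lemma getElem_toWord_inv [DecidableEq α] (x : FreeGroup α) (i : ℕ) (hi : i < x.toWord.length) :
    (x⁻¹).toWord[(x⁻¹).toWord.length - 1 - i]'(by rw [length_toWord_inv]; omega)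
      = linv (x.toWord[i]'hi) := by
  have h0 : (x⁻¹).toWord = FreeGroup.invRev x.toWord := FreeGroup.toWord_inv x
  have h1 : (x⁻¹).toWord.length - 1 - i = x.toWord.length - 1 - i := by
    rw [length_toWord_inv]
  rw [getElem_idx_congr h1]
  have h3 : x.toWord.length - 1 - (x.toWord.length - 1 - (x.toWord.length - 1 - i)) =
      x.toWord.length - 1 - i := by omega
  have := getElem_invRev x.toWord (x.toWord.length - 1 - i) (by omega)
  have h4 : x.toWord.length - 1 - (x.toWord.length - 1 - i) = i := by omega
  calc (x⁻¹).toWord[x.toWord.length - 1 - i]'(by rw [length_toWord_inv]; omega)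
      = (FreeGroup.invRev x.toWord)[x.toWord.length - 1 - i]'(by rw [length_invRev]; omega) := by
        congr 1
    _ = linv (x.toWord[x.toWord.length - 1 - (x.toWord.length - 1 - i)]'(by omega)) := this
    _ = linv (x.toWord[i]'hi) := by rw [getElem_idx_congr h4]

lemma cancel_full [DecidableEq α] (x y : FreeGroup α) :
    ∃ c, ∃ _ : c ≤ x.toWord.length, ∃ _ : c ≤ y.toWord.length,
      (x * y).toWord = x.toWord.take (x.toWord.length - c) ++ y.toWord.drop c ∧
      (∀ i (hi : i < c),
        y.toWord[i]'(by omega) = linv (x.toWord[x.toWord.length - 1 - i]'(by omega))) ∧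
      (∀ (h1 : c < x.toWord.length) (h2 : c < y.toWord.length),
        y.toWord[c]'h2 ≠ linv (x.toWord[x.toWord.length - 1 - c]'(by omega))) := by
  obtain ⟨c, hca, hcb, heq, hpairs, hjunc⟩ :=
    cancel_spec x.toWord y.toWord (rd_toWord x) (rd_toWord y)
  refine ⟨c, hca, hcb, ?_, hpairs, hjunc⟩
  conv_lhs => rw [← FreeGroup.mk_toWord (x := x), ← FreeGroup.mk_toWord (x := y)]
  rw [FreeGroup.mul_mk, FreeGroup.toWord_mk, heq]

lemma cancel_length [DecidableEq α] {x y : FreeGroup α} {c : ℕ} {w : List (α × Bool)}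
    (hca : c ≤ x.toWord.length) (hcb : c ≤ y.toWord.length)
    (heq : w = x.toWord.take (x.toWord.length - c) ++ y.toWord.drop c) :
    w.length + 2 * c = x.toWord.length + y.toWord.length := by
  rw [heq]
  simp only [List.length_append, List.length_take, List.length_drop]
  omega

/-- Common prefix decomposition of a pair of group elements. -/
lemma cp_spec [DecidableEq α] (x y : FreeGroup α) :
    ∃ c, ∃ _ : c ≤ x.toWord.length, ∃ _ : c ≤ y.toWord.length,
      (x⁻¹ * y).toWord.length + 2 * c = x.toWord.length + y.toWord.length ∧
      x.toWord.take c = y.toWord.take c ∧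
      (∀ (h1 : c < x.toWord.length) (h2 : c < y.toWord.length),
        x.toWord[c]'h1 ≠ y.toWord[c]'h2) := by
  obtain ⟨c, hca, hcb, heq, hpairs, hjunc⟩ := cancel_full x⁻¹ y
  have hlx : (x⁻¹).toWord.length = x.toWord.length := length_toWord_inv x
  refine ⟨c, by omega, hcb, ?_, ?_, ?_⟩
  · have := cancel_length hca hcb heq
    omega
  · refine List.ext_getElem (by simp only [List.length_take]; omega) ?_
    intro i h1 h2
    rw [List.getElem_take, List.getElem_take]
    have hi : i < c := by
      simp only [List.length_take] at h1; omega
    have hp := hpairs i hi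
    rw [getElem_toWord_inv x i (by omega)] at hp
    rw [hp, linv_linv]
  · intro h1 h2
    have hj := hjunc (by omega) h2
    rw [getElem_toWord_inv x c h1] at hj
    rw [linv_linv] at hj
    exact fun he => hj he.symm

/-- Gate lemma: entering the subtree of words with prefix `u` passes through `u`. -/
lemma gate [DecidableEq α] (u x y : FreeGroup α)
    (hx : ¬ (u.toWord <+: x.toWord)) (hy : u.toWord <+: y.toWord) :
    (u⁻¹ * x).toWord.length ≤ (x⁻¹ * y).toWord.length := by
  obtain ⟨cxy, hc1, hc2, hlen1, htake1, hdiff1⟩ := cp_spec x y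
  obtain ⟨cux, hc3, hc4, hlen2, htake2, hdiff2⟩ := cp_spec u x
  have huy : u.toWord.length ≤ y.toWord.length := hy.length_le
  have hcu : cxy < u.toWord.length := by
    by_contra hge
    push_neg at hge
    apply hx
    rw [List.prefix_iff_eq_take]
    rw [List.prefix_iff_eq_take] at hy
    refine hy.trans ?_
    refine List.ext_getElem (by simp only [List.length_take]; omega) ?_
    intro i hh1 hh2
    rw [List.getElem_take, List.getElem_take]
    have hi : i < cxy := by
      simp only [List.length_take] at hh1
      omega
    have := congrArg (fun l => l[i]?) htake1
    simp only [List.getElem?_take, hi, if_pos] at this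
    have hx1 : i < x.toWord.length := by omega
    have hy1 : i < y.toWord.length := by omega
    rw [List.getElem?_eq_getElem hx1, List.getElem?_eq_getElem hy1] at this
    exact (Option.some_injective _ this).symm
  have hkey : cxy ≤ cux := by
    by_contra hlt
    push_neg at hlt
    have h1 : cux < u.toWord.length := by omega
    have h2 : cux < x.toWord.length := by omega
    apply hdiff2 h1 h2
    have e1 : u.toWord[cux]'h1 = y.toWord[cux]'(by omega) := hy.getElem h1
    have e2 : x.toWord[cux]'h2 = y.toWord[cux]'(by omega) := by
      have := congrArg (fun l => l[cux]?) htake1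
      simp only [List.getElem?_take, hlt, if_pos] at this
      rw [List.getElem?_eq_getElem h2, List.getElem?_eq_getElem (by omega : cux < y.toWord.length)]
        at this
      exact Option.some_injective _ this
    rw [e1, e2]
  omega

lemma fg_norm_mul_le [DecidableEq α] (x y : FreeGroup α) :
    (x * y).toWord.length ≤ x.toWord.length + y.toWord.length := by
  have := (FreeGroup.toWord_mul_sublist x y).length_le
  simpa using this

lemma single_norm [DecidableEq α] {S : ℕ} (ψ : FreeGroup α ≃* FreeGroup α)
    (hS : ∀ x : α, (ψ (FreeGroup.of x)).toWord.length ≤ S) (ℓ : α × Bool) :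
    (ψ (FreeGroup.mk [ℓ])).toWord.length ≤ S := by
  obtain ⟨a, b⟩ := ℓ
  cases b
  · have h1 : FreeGroup.mk [(a, false)] = (FreeGroup.of a)⁻¹ := by
      rw [show FreeGroup.of a = FreeGroup.mk [(a, true)] from rfl, FreeGroup.inv_mk]
      simp [FreeGroup.invRev]
    rw [h1, _root_.map_inv ψ (FreeGroup.of a), length_toWord_inv]
    exact hS a
  · exact hS a

lemma lip_list [DecidableEq α] {S : ℕ} (ψ : FreeGroup α ≃* FreeGroup α)
    (hS : ∀ x : α, (ψ (FreeGroup.of x)).toWord.length ≤ S) :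
    ∀ L : List (α × Bool), (ψ (FreeGroup.mk L)).toWord.length ≤ S * L.length := by
  intro L
  induction L with
  | nil =>
    have : FreeGroup.mk ([] : List (α × Bool)) = 1 := rfl
    simp [this]
  | cons ℓ L ih =>
    have h1 : FreeGroup.mk (ℓ :: L) = FreeGroup.mk [ℓ] * FreeGroup.mk L := by
      rw [FreeGroup.mul_mk]; rfl
    rw [h1, _root_.map_mul ψ (FreeGroup.mk [ℓ]) (FreeGroup.mk L)]
    calc (ψ (FreeGroup.mk [ℓ]) * ψ (FreeGroup.mk L)).toWord.length
        ≤ (ψ (FreeGroup.mk [ℓ])).toWord.length + (ψ (FreeGroup.mk L)).toWord.length :=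
          fg_norm_mul_le _ _
      _ ≤ S + S * L.length := Nat.add_le_add (single_norm ψ hS ℓ) ih
      _ = S * (ℓ :: L).length := by simp [Nat.mul_succ]; omega

lemma lip [DecidableEq α] {S : ℕ} (ψ : FreeGroup α ≃* FreeGroup α)
    (hS : ∀ x : α, (ψ (FreeGroup.of x)).toWord.length ≤ S) (g : FreeGroup α) :
    (ψ g).toWord.length ≤ S * g.toWord.length := by
  conv_lhs => rw [← FreeGroup.mk_toWord (x := g)]
  exact lip_list ψ hS g.toWord

lemma exists_crossing {P : ℕ → Prop} (M : ℕ) (h0 : ¬ P 0) (hM : P M) :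
    ∃ j, ¬ P j ∧ P (j + 1) := by
  induction M with
  | zero => exact absurd hM h0
  | succ M ih =>
    by_cases hPM : P M
    · exact ih hPM
    · exact ⟨M, hPM, hM⟩

/-- **Cooper's bounded cancellation**: if `u * v` multiplies without cancellation, then
`φ(u*v)` begins with all but at most `S²` letters of `φ(u)`. -/
lemma cooper [DecidableEq α] (S : ℕ) (ψ : FreeGroup α ≃* FreeGroup α)
    (hS1 : ∀ x : α, (ψ (FreeGroup.of x)).toWord.length ≤ S)
    (hS2 : ∀ x : α, (ψ.symm (FreeGroup.of x)).toWord.length ≤ S)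
    (u v : FreeGroup α) (huv : (u * v).toWord = u.toWord ++ v.toWord) :
    (ψ u).toWord.take ((ψ u).toWord.length - S * S) <+: (ψ (u * v)).toWord := by
  by_cases hu0 : u.toWord = []
  · have : u = 1 := FreeGroup.toWord_eq_nil_iff.mp hu0
    subst this
    simp
  -- setup
  obtain ⟨c, hca, hcb, heq, hpairs, hjunc⟩ := cancel_full (ψ u) (ψ v)
  have hmul : ψ (u * v) = ψ u * ψ v := _root_.map_mul ψ u v
  -- main claim : c ≤ S * S
  have hcS : c ≤ S * S := by
    set hw := (ψ (u * v)).toWord with hhw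
    set M := hw.length with hM
    set p : ℕ → FreeGroup α := fun j => ψ.symm (FreeGroup.mk (hw.take j)) with hp
    have hP0 : ¬ (u.toWord <+: (p 0).toWord) := by
      have : p 0 = 1 := by
        simp only [hp, List.take_zero]
        rw [show FreeGroup.mk ([] : List (α × Bool)) = 1 from rfl, _root_.map_one ψ.symm]
      rw [this, FreeGroup.toWord_one]
      intro hpre
      exact hu0 (List.prefix_nil.mp hpre)
    have hPM : u.toWord <+: (p M).toWord := by
      have h1 : p M = u * v := by
        simp only [hp, hM, List.take_length]
        rw [hhw, FreeGroup.mk_toWord]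
        exact ψ.symm_apply_apply (u * v)
      rw [h1, huv]
      exact List.prefix_append _ _
    obtain ⟨j, hj1, hj2⟩ := exists_crossing (P := fun j => u.toWord <+: (p j).toWord) M hP0 hPM
    -- step bound
    have hstep : ((p j)⁻¹ * p (j + 1)).toWord.length ≤ S := by
      by_cases hjM : j < M
      · have hsplit : hw.take (j + 1) = hw.take j ++ [hw[j]'(hjM)] := by
          rw [List.take_succ, List.getElem?_eq_getElem hjM]
          rfl
        have : p (j + 1) = p j * ψ.symm (FreeGroup.mk [hw[j]'hjM]) := by
          simp only [hp, hsplit]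
          rw [← FreeGroup.mul_mk, _root_.map_mul ψ.symm]
        rw [this, inv_mul_cancel_left]
        exact single_norm ψ.symm hS2 _
      · have : hw.take (j + 1) = hw.take j := by
          rw [List.take_of_length_le (by omega), List.take_of_length_le (by omega)]
        have hpp : p (j + 1) = p j := by simp only [hp, this]
        rw [hpp, inv_mul_cancel, FreeGroup.toWord_one]
        exact Nat.zero_le _
    -- gate
    have hgate := gate u (p j) (p (j + 1)) hj1 hj2
    have hnear : (u⁻¹ * p j).toWord.length ≤ S := le_trans hgate hstep
    -- lift through ψ
    have hlift : (ψ (u⁻¹ * p j)).toWord.length ≤ S * S :=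
      le_trans (lip ψ hS1 _) (Nat.mul_le_mul_left S hnear)
    have himg : ψ (u⁻¹ * p j) = (ψ u)⁻¹ * FreeGroup.mk (hw.take j) := by
      rw [_root_.map_mul ψ, _root_.map_inv ψ, hp]
      simp only
      rw [ψ.apply_symm_apply]
    rw [himg] at hlift
    -- now show c ≤ ((ψ u)⁻¹ * mk (hw.take j)).toWord.length
    set Pj := FreeGroup.mk (hw.take j) with hPj
    have hPjw : Pj.toWord = hw.take j := toWord_mk_rd ((rd_toWord _).take j)
    obtain ⟨d, hd1, hd2, hdlen, hdtake, hddiff⟩ := cp_spec (ψ u) Pj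
    have hdc : d + c ≤ (ψ u).toWord.length := by
      by_contra hgt
      push_neg at hgt
      have hc1 : 1 ≤ c := by omega
      set t := (ψ u).toWord.length - c with ht
      have htd : t < d := by omega
      have htg : t < (ψ u).toWord.length := by omega
      have htP : t < Pj.toWord.length := by omega
      -- (ψ u).toWord[t] = Pj.toWord[t] = hw[t]
      have e1 : (ψ u).toWord[t]'htg = Pj.toWord[t]'htP := by
        have := congrArg (fun l => l[t]?) hdtake
        simp only [List.getElem?_take, htd, if_pos] at this
        rw [List.getElem?_eq_getElem htg, List.getElem?_eq_getElem htP] at this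
        exact Option.some_injective _ this
      have htM : t < M := by
        have := hPjw ▸ htP
        have h5 : (hw.take j).length ≤ hw.length := by
          simp [List.length_take]
        simp only [List.length_take] at this
        omega
      have h7 : t < (List.take j hw).length := hPjw ▸ htP
      have htj : t < j := by
        simp only [List.length_take] at h7; omega
      have e2 : Pj.toWord[t]'htP = hw[t]'htM := by
        have h8 := congrArg (fun l => l[t]?) hPjw
        rw [List.getElem?_eq_getElem htP, List.getElem?_take, if_pos htj,
          List.getElem?_eq_getElem htM] at h8
        exact Option.some_injective _ h8
      -- hw[t] = (ψ v).toWord[c]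
      have hlen2 : hw.length + 2 * c = (ψ u).toWord.length + (ψ v).toWord.length := by
        rw [hhw, hmul]
        exact cancel_length hca hcb heq
      have hcv : c < (ψ v).toWord.length := by omega
      have hw_eq : hw = List.take ((ψ u).toWord.length - c) (ψ u).toWord
          ++ List.drop c (ψ v).toWord := by
        rw [hhw, hmul]; exact heq
      have h6 : t < (List.take ((ψ u).toWord.length - c) (ψ u).toWord
          ++ List.drop c (ψ v).toWord).length := by
        simp only [List.length_append, List.length_take, List.length_drop]; omega
      have e3 : hw[t]'htM = (ψ v).toWord[c]'hcv := by
        have h9 := congrArg (fun l => l[t]?) hw_eq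
        rw [List.getElem?_eq_getElem htM, List.getElem?_eq_getElem h6] at h9
        rw [Option.some_injective _ h9]
        rw [List.getElem_append_right (by simp only [List.length_take]; omega)]
        rw [List.getElem_drop]
        apply getElem_idx_congr
        simp only [List.length_take]
        omega
      -- pairs at c-1
      have hpair := hpairs (c - 1) (by omega)
      have e4 : (ψ u).toWord[(ψ u).toWord.length - 1 - (c - 1)]'(by omega)
          = (ψ u).toWord[t]'htg := by
        apply getElem_idx_congr
        omega
      rw [e4] at hpair
      -- contradiction with reducedness of (ψ v).toWord
      have hred := (rd_toWord (ψ v)).get' (c - 1) (by omega)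
      apply hred
      have e5 : (ψ v).toWord[c - 1 + 1]'(by omega) = (ψ v).toWord[c]'hcv := by
        apply getElem_idx_congr
        omega
      rw [e5, hpair, e1, e2, e3, linv_linv]
    have : c ≤ ((ψ u)⁻¹ * Pj).toWord.length := by omega
    omega
  -- conclude
  rw [hmul, heq]
  have h1 : (ψ u).toWord.take ((ψ u).toWord.length - S * S)
      = ((ψ u).toWord.take ((ψ u).toWord.length - c)).take ((ψ u).toWord.length - S * S) := by
    rw [List.take_take, min_eq_left (by omega)]
  rw [h1]
  exact (List.take_prefix _ _).trans (List.prefix_append _ _)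

@[simp] lemma pre_length (ξ : Bd α) (m : ℕ) : (pre ξ m).length = m := by
  simp [pre]

lemma pre_getElem (ξ : Bd α) (m i : ℕ) (h : i < (pre ξ m).length) :
    (pre ξ m)[i] = ξ.1 i := by
  simp [pre]

lemma rd_pre (ξ : Bd α) (m : ℕ) : Rd (pre ξ m) := by
  rw [Rd, List.isChain_iff_getElem]
  intro i hi
  simp only [List.get_eq_getElem, pre_getElem]
  exact ξ.2 i

lemma pre_take (ξ : Bd α) {a m : ℕ} (h : a ≤ m) : (pre ξ m).take a = pre ξ a := by
  refine List.ext_getElem (by simp [List.length_take]; omega) ?_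
  intro i h1 h2
  rw [List.getElem_take, pre_getElem, pre_getElem]

lemma mk_split [DecidableEq α] (L : List (α × Bool)) (a : ℕ) :
    FreeGroup.mk (L.take a) * FreeGroup.mk (L.drop a) = FreeGroup.mk L := by
  rw [FreeGroup.mul_mk, List.take_append_drop]

lemma toWord_split [DecidableEq α] {L : List (α × Bool)} (h : Rd L) (a : ℕ) :
    (FreeGroup.mk (L.take a) * FreeGroup.mk (L.drop a)).toWord =
      (FreeGroup.mk (L.take a)).toWord ++ (FreeGroup.mk (L.drop a)).toWord := by
  rw [mk_split, toWord_mk_rd h, toWord_mk_rd (h.take a), toWord_mk_rd (h.drop a),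
    List.take_append_drop]

/-- Ibrahim's formula: `φ(C¹_u) = C¹_U` with
`U = { φ(u')|_{S(φ)²} : u' ∈ u|^k }`, `k = S(φ)⁴ + S(φ)³ + S(φ)²`. -/
theorem stmt12 [DecidableEq α] [Fintype α] [Nontrivial α]
    (φ : FreeGroup α ≃* FreeGroup α) (Φ : Bd α → Bd α) (hΦ : ExtendsBd φ Φ)
    (u : FreeGroup α)
    (S : ℕ)
    (hS : S = Finset.univ.sup (fun x : α =>
      max ((φ (FreeGroup.of x)).toWord.length) ((φ.symm (FreeGroup.of x)).toWord.length))) :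
    Φ '' Cyl u.toWord =
      ⋃ u' ∈ {z : List (α × Bool) | FreeGroup.reduce z = z ∧
          z.length = u.toWord.length + (S ^ 4 + S ^ 3 + S ^ 2) ∧ u.toWord <+: z},
        Cyl (((φ (FreeGroup.mk u')).toWord).take
          ((φ (FreeGroup.mk u')).toWord.length - S ^ 2)) := by
  have hS1 : ∀ x : α, (φ (FreeGroup.of x)).toWord.length ≤ S := fun x =>
    le_trans (le_max_left _ _) (hS ▸ Finset.le_sup (Finset.mem_univ x))
  have hS2 : ∀ x : α, (φ.symm (FreeGroup.of x)).toWord.length ≤ S := fun x =>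
    le_trans (le_max_right _ _) (hS ▸ Finset.le_sup (Finset.mem_univ x))
  have hS1' : ∀ x : α, (φ.symm.symm (FreeGroup.of x)).toWord.length ≤ S := by
    simpa using hS1
  have hSpos : 1 ≤ S := by
    obtain ⟨x, y, hxy⟩ := exists_pair_ne α
    have h1 : φ (FreeGroup.of x) ≠ 1 := by
      rw [Ne, map_eq_one_iff φ (EmbeddingLike.injective φ)]
      exact FreeGroup.of_ne_one x
    have h2 : (φ (FreeGroup.of x)).toWord ≠ [] := fun h => h1 (FreeGroup.toWord_eq_nil_iff.mp h)
    have h3 := hS1 x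
    have h4 : 0 < (φ (FreeGroup.of x)).toWord.length := List.length_pos_iff.mpr h2
    omega
  have e2 : S ^ 2 = S * S := by ring
  have e3 : S ^ 3 = S * (S * S) := by ring
  have e4 : S ^ 4 = S * S * (S * S) := by ring
  apply Set.ext
  intro η
  constructor
  -- ⊆ direction
  · rintro ⟨ξ, hξ, rfl⟩
    set N := u.toWord.length + (S ^ 4 + S ^ 3 + S ^ 2) with hN
    have huwpre : u.toWord <+: pre ξ N := by
      rw [List.prefix_iff_eq_take]
      refine List.ext_getElem (by simp only [List.length_take, pre_length]; omega) ?_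
      intro i h1 h2
      rw [List.getElem_take, pre_getElem]
      have h5 := hξ i h1
      simp only [List.get_eq_getElem] at h5
      exact h5.symm
    refine Set.mem_iUnion₂.mpr ⟨pre ξ N, ⟨(rd_pre ξ N).reduce_eq, by simp, huwpre⟩, ?_⟩
    set L := (φ (FreeGroup.mk (pre ξ N))).toWord.length with hL
    obtain ⟨n, hn⟩ := hΦ ξ L
    set m := max n N with hm
    have hW := hn m (le_max_left _ _)
    have hWlen : L ≤ (φ (FreeGroup.mk (pre ξ m))).toWord.length := by
      have h6 := congrArg List.length hW
      simp only [List.length_take, List.length_ofFn] at h6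
      omega
    have hcoop : (φ (FreeGroup.mk (pre ξ N))).toWord.take (L - S * S)
        <+: (φ (FreeGroup.mk (pre ξ m))).toWord := by
      have hred2 := toWord_split (rd_pre ξ m) N
      rw [pre_take ξ (le_max_right n N)] at hred2
      have hc := cooper S φ hS1 hS2 _ _ hred2
      have hsplit : FreeGroup.mk (pre ξ N) * FreeGroup.mk ((pre ξ m).drop N)
          = FreeGroup.mk (pre ξ m) := by
        conv_lhs => rw [← pre_take ξ (le_max_right n N)]
        rw [mk_split]
      rwa [hsplit] at hc
    intro i hi
    have hil : i < L - S * S := by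
      simp only [List.length_take] at hi
      omega
    have hiL : i < L := by omega
    have eq1 : ((φ (FreeGroup.mk (pre ξ N))).toWord.take (L - S ^ 2)).get ⟨i, hi⟩
        = (φ (FreeGroup.mk (pre ξ N))).toWord[i]'(by omega) := by
      simp only [List.get_eq_getElem, List.getElem_take]
    have eq2 : ((φ (FreeGroup.mk (pre ξ N))).toWord.take (L - S * S))[i]'(by
          simp only [List.length_take]; omega)
        = (φ (FreeGroup.mk (pre ξ N))).toWord[i]'(by omega) := List.getElem_take
    have eq3 := hcoop.getElem (i := i) (by simp only [List.length_take]; omega)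
    have eq4 : ((φ (FreeGroup.mk (pre ξ m))).toWord)[i]'(by omega) = (Φ ξ).1 i := by
      have h7 := congrArg (fun l => l[i]?) hW
      rw [List.getElem?_take, if_pos hiL, List.getElem?_eq_getElem (by omega),
        List.getElem?_eq_getElem (by rw [List.length_ofFn]; exact hiL)] at h7
      rw [Option.some_injective _ h7, List.getElem_ofFn]
    rw [eq1, ← eq2, eq3, eq4]
  -- ⊇ direction
  · intro hmem
    obtain ⟨u', hu'mem, hcyl⟩ := Set.mem_iUnion₂.mp hmem
    obtain ⟨hredu', hlen, hpref⟩ := hu'mem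
    have hrdu' : Rd u' := rd_iff.mpr hredu'
    have hgw : (FreeGroup.mk u').toWord = u' := by rw [FreeGroup.toWord_mk, hredu']
    set g := FreeGroup.mk u' with hg
    set L := (φ g).toWord.length with hL
    set D := (φ g).toWord.take (L - S ^ 2) with hD
    have hDlen : D.length = L - S ^ 2 := by
      rw [hD, List.length_take]; omega
    have hrdD : Rd D := (rd_toWord (φ g)).take _
    -- approximants W m := (φ.symm (mk (pre η m))).toWord
    have hWm : ∀ m : ℕ, m ≤ S * (φ.symm (FreeGroup.mk (pre η m))).toWord.length := by
      intro m
      have h1 : φ (φ.symm (FreeGroup.mk (pre η m))) = FreeGroup.mk (pre η m) :=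
        φ.apply_symm_apply _
      have h2 := lip φ hS1 (φ.symm (FreeGroup.mk (pre η m)))
      rw [h1, toWord_mk_rd (rd_pre η m), pre_length] at h2
      exact h2
    have hkey : ∀ m m' : ℕ, m ≤ m' →
        (φ.symm (FreeGroup.mk (pre η m))).toWord.take
            ((φ.symm (FreeGroup.mk (pre η m))).toWord.length - S * S)
          <+: (φ.symm (FreeGroup.mk (pre η m'))).toWord := by
      intro m m' hmm'
      have hred2 := toWord_split (rd_pre η m') m
      rw [pre_take η hmm'] at hred2
      have hc := cooper S φ.symm hS2 hS1' _ _ hred2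
      have hsplit : FreeGroup.mk (pre η m) * FreeGroup.mk ((pre η m').drop m)
          = FreeGroup.mk (pre η m') := by
        conv_lhs => rw [← pre_take η hmm']
        rw [mk_split]
      rwa [hsplit] at hc
    have hstab : ∀ m₁ m₂ n : ℕ,
        n + S * S < (φ.symm (FreeGroup.mk (pre η m₁))).toWord.length →
        n + S * S < (φ.symm (FreeGroup.mk (pre η m₂))).toWord.length →
        ∀ (hh1 : n < (φ.symm (FreeGroup.mk (pre η m₁))).toWord.length)
          (hh2 : n < (φ.symm (FreeGroup.mk (pre η m₂))).toWord.length),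
        (φ.symm (FreeGroup.mk (pre η m₁))).toWord[n]'hh1
          = (φ.symm (FreeGroup.mk (pre η m₂))).toWord[n]'hh2 := by
      intro m₁ m₂ n h1 h2 hh1 hh2
      have k1 := hkey m₁ (max m₁ m₂) (le_max_left _ _)
      have k2 := hkey m₂ (max m₁ m₂) (le_max_right _ _)
      have f1 := k1.getElem (i := n) (by simp only [List.length_take]; omega)
      have f2 := k2.getElem (i := n) (by simp only [List.length_take]; omega)
      rw [List.getElem_take] at f1 f2
      rw [f1, f2]
    have hMlen : ∀ n : ℕ, n + S * S < (φ.symm (FreeGroup.mk (pre η (S * (n + S * S + 1))))).toWord.length := by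
      intro n
      have h1 := hWm (S * (n + S * S + 1))
      have h2 := Nat.le_of_mul_le_mul_left h1 (by omega : 0 < S)
      omega
    set ξf : ℕ → α × Bool := fun n =>
      (φ.symm (FreeGroup.mk (pre η (S * (n + S * S + 1))))).toWord[n]'(by
        have := hMlen n; omega) with hξf
    have hstabf : ∀ m n : ℕ, n + S * S < (φ.symm (FreeGroup.mk (pre η m))).toWord.length →
        ∀ (hh : n < (φ.symm (FreeGroup.mk (pre η m))).toWord.length),
        (φ.symm (FreeGroup.mk (pre η m))).toWord[n]'hh = ξf n := by
      intro m n h hh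
      exact hstab m (S * (n + S * S + 1)) n h (hMlen n) hh (by have := hMlen n; omega)
    have hchain : ∀ n, ξf (n + 1) ≠ linv (ξf n) := by
      intro n
      have hlen1 := hMlen (n + 1)
      have g1 := hstabf (S * ((n + 1) + S * S + 1)) (n + 1) hlen1 (by omega)
      have g2 := hstabf (S * ((n + 1) + S * S + 1)) n (by omega) (by omega)
      rw [← g1, ← g2]
      exact (rd_toWord _).get' n (by omega)
    set ξ : Bd α := ⟨ξf, hchain⟩ with hξdef
    -- η begins with D
    have hDpre : ∀ m : ℕ, D.length ≤ m → (pre η m).take D.length = D := by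
      intro m hm
      refine List.ext_getElem (by simp only [List.length_take, pre_length]; omega) ?_
      intro i h1 h2
      rw [List.getElem_take, pre_getElem]
      have h5 := hcyl i h2
      simp only [List.get_eq_getElem] at h5
      exact h5
    -- E <+: u'
    have hEu' : (φ.symm (FreeGroup.mk D)).toWord.take
        ((φ.symm (FreeGroup.mk D)).toWord.length - S * S) <+: u' := by
      have hred2 := toWord_split (rd_toWord (φ g)) (L - S ^ 2)
      rw [← hD] at hred2
      have hc := cooper S φ.symm hS2 hS1' _ _ hred2
      have hsplit : FreeGroup.mk D * FreeGroup.mk ((φ g).toWord.drop (L - S ^ 2)) = φ g := by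
        rw [hD, mk_split, FreeGroup.mk_toWord]
      rw [hsplit, φ.symm_apply_apply, hgw] at hc
      exact hc
    -- length bound for φ.symm (mk D)
    have hu'len : u'.length ≤ (φ.symm (FreeGroup.mk D)).toWord.length + S * (S * S) := by
      have h1 : g = φ.symm (FreeGroup.mk D)
          * φ.symm (FreeGroup.mk ((φ g).toWord.drop (L - S ^ 2))) := by
        rw [← _root_.map_mul φ.symm, hD, mk_split, FreeGroup.mk_toWord, φ.symm_apply_apply]
      have h2 := fg_norm_mul_le (φ.symm (FreeGroup.mk D))
        (φ.symm (FreeGroup.mk ((φ g).toWord.drop (L - S ^ 2))))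
      have h3 := lip φ.symm hS2 (FreeGroup.mk ((φ g).toWord.drop (L - S ^ 2)))
      have h4 : (FreeGroup.mk ((φ g).toWord.drop (L - S ^ 2))).toWord.length ≤ S * S := by
        rw [toWord_mk_rd ((rd_toWord (φ g)).drop _)]
        simp only [List.length_drop]
        omega
      have h5 : S * (FreeGroup.mk ((φ g).toWord.drop (L - S ^ 2))).toWord.length
          ≤ S * (S * S) := Nat.mul_le_mul_left S h4
      have h6 : u'.length = g.toWord.length := by rw [hgw]
      rw [h6, h1]
      omega
    have hLDb : u.toWord.length + S * S ≤ (φ.symm (FreeGroup.mk D)).toWord.length := by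
      omega
    have hEw : u.toWord <+: (φ.symm (FreeGroup.mk D)).toWord.take
        ((φ.symm (FreeGroup.mk D)).toWord.length - S * S) :=
      List.prefix_of_prefix_length_le hpref hEu'
        (by simp only [List.length_take]; omega)
    -- ξ ∈ Cyl u.toWord
    have hξCyl : ξ ∈ Cyl u.toWord := by
      intro i hiu
      have hDm : D.length ≤ max D.length (S * (i + S * S + 1)) := le_max_left _ _
      set m := max D.length (S * (i + S * S + 1)) with hm
      have h1 : i + S * S < (φ.symm (FreeGroup.mk (pre η m))).toWord.length := by
        have h2 := hWm m
        have h3 : S * (i + S * S + 1) ≤ m := le_max_right _ _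
        have h4 := Nat.le_of_mul_le_mul_left (le_trans h3 h2) (by omega : 0 < S)
        omega
      have g0 := hstabf m i h1 (by omega)
      have hred2 := toWord_split (rd_pre η m) D.length
      rw [hDpre m hDm] at hred2
      have hc := cooper S φ.symm hS2 hS1' _ _ hred2
      have hsplit : FreeGroup.mk D * FreeGroup.mk ((pre η m).drop D.length)
          = FreeGroup.mk (pre η m) := by
        have hq := mk_split (pre η m) D.length
        rw [hDpre m hDm] at hq
        exact hq
      rw [hsplit] at hc
      have hfin := (hEw.trans hc).getElem (i := i) hiu
      show ξf i = u.toWord.get ⟨i, hiu⟩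
      simp only [List.get_eq_getElem]
      rw [← g0, ← hfin]
    -- Φ ξ = η
    have hΦξ : Φ ξ = η := by
      apply Subtype.ext
      funext j
      obtain ⟨n₀, hn₀⟩ := hΦ ξ (j + 1)
      set m := max n₀ (S * (j + S * S + 1)) with hm
      set m' := S * (m + S * S) with hm'
      have hWm'len : m + S * S ≤ (φ.symm (FreeGroup.mk (pre η m'))).toWord.length := by
        have h1 := hWm m'
        exact Nat.le_of_mul_le_mul_left (by omega) (by omega : 0 < S)
      have hpre_eq : pre ξ m = ((φ.symm (FreeGroup.mk (pre η m'))).toWord).take m := by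
        refine List.ext_getElem (by simp only [List.length_take, pre_length]; omega) ?_
        intro i h1 h2
        have h3 : i < m := by simp only [List.length_take] at h2; omega
        rw [pre_getElem, List.getElem_take]
        exact (hstabf m' i (by omega) (by omega)).symm
      have hred2 := toWord_split (rd_toWord (φ.symm (FreeGroup.mk (pre η m')))) m
      have hc := cooper S φ hS1 hS2 _ _ hred2
      have hsplit : FreeGroup.mk (((φ.symm (FreeGroup.mk (pre η m'))).toWord).take m)
          * FreeGroup.mk (((φ.symm (FreeGroup.mk (pre η m'))).toWord).drop m)
          = φ.symm (FreeGroup.mk (pre η m')) := by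
        rw [mk_split, FreeGroup.mk_toWord]
      rw [hsplit, φ.apply_symm_apply, toWord_mk_rd (rd_pre η m'), ← hpre_eq] at hc
      have hLx : j + S * S + 1 ≤ (φ (FreeGroup.mk (pre ξ m))).toWord.length := by
        have h5 := lip φ.symm hS2 (φ (FreeGroup.mk (pre ξ m)))
        rw [φ.symm_apply_apply, toWord_mk_rd (rd_pre ξ m), pre_length] at h5
        have h6 : S * (j + S * S + 1) ≤ m := le_max_right _ _
        exact Nat.le_of_mul_le_mul_left (le_trans h6 h5) (by omega)
      have hWφ := hn₀ m (le_max_left _ _)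
      have eq4 : (φ (FreeGroup.mk (pre ξ m))).toWord[j]'(by omega) = (Φ ξ).1 j := by
        have h7 := congrArg (fun l => l[j]?) hWφ
        rw [List.getElem?_take, if_pos (by omega : j < j + 1),
          List.getElem?_eq_getElem (by omega),
          List.getElem?_eq_getElem (by rw [List.length_ofFn]; omega)] at h7
        rw [Option.some_injective _ h7, List.getElem_ofFn]
      have eq5 := hc.getElem (i := j) (by simp only [List.length_take]; omega)
      rw [List.getElem_take] at eq5
      have hjm' : j < m' := by
        have h8 : S * (j + S * S + 1) ≤ m := le_max_right _ _
        have h9 : 1 * (j + S * S + 1) ≤ S * (j + S * S + 1) :=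
          Nat.mul_le_mul_right _ hSpos
        have h10 : 1 * (m + S * S) ≤ S * (m + S * S) := Nat.mul_le_mul_right _ hSpos
        omega
      rw [pre_getElem η m' j (by rw [pre_length]; exact hjm')] at eq5
      show (Φ ξ).1 j = η.1 j
      rw [← eq4, eq5]
    exact ⟨ξ, hξCyl, hΦξ⟩
end
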